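/- arXiv:2404.08473 — 14 statements merged into one kernel-verified Lean document; each statement's English description precedes it below -/
import Mathlib

section
/- Let H be a complex Hilbert space and let T, P ∈ B(H). If the power sequence {T^n} converges weakly to P, then P is a projection (P² = P) which commutes with T (TP = PT), the range of P equals ker(I − T), and the restriction of T to the closed subspace ran(I − P) is weakly stable, i.e., for every x ∈ ran(I − P) and every y ∈ H one has ⟨T^n x, y⟩ → 0 as n → ∞. -/
open Filter Topology

/-- If the power sequence `{T^n}` converges weakly to `P`, then `P` is a projection
commuting with `T`, `ran P = ker (I - T)`, and the restriction of `T` to `ran (I - P)`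
is weakly stable. -/
theorem stmt0 {H : Type*} [NormedAddCommGroup H] [InnerProductSpace ℂ H] [CompleteSpace H]
    (T P : H →L[ℂ] H)
    (hconv : ∀ x y : H,
      Tendsto (fun n : ℕ => (inner ℂ ((T ^ n) x) y : ℂ)) atTop (𝓝 (inner ℂ (P x) y))) :
    P ∘L P = P ∧ T ∘L P = P ∘L T ∧ LinearMap.range (P : H →ₗ[ℂ] H) = LinearMap.ker ((1 - T : H →L[ℂ] H) : H →ₗ[ℂ] H) ∧
      ∀ x ∈ LinearMap.range ((1 - P : H →L[ℂ] H) : H →ₗ[ℂ] H), ∀ y : H,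
        Tendsto (fun n : ℕ => (inner ℂ ((T ^ n) x) y : ℂ)) atTop (𝓝 (0 : ℂ)) := by
  -- shifted convergence
  have hshift : ∀ x y : H,
      Tendsto (fun n : ℕ => (inner ℂ ((T ^ (n + 1)) x) y : ℂ)) atTop (𝓝 (inner ℂ (P x) y)) := by
    intro x y
    exact (tendsto_add_atTop_iff_nat 1).mpr (hconv x y)
  -- P ∘ T = P
  have hPT : ∀ x : H, P (T x) = P x := by
    intro x
    apply ext_inner_right ℂ
    intro y
    have h1 := hconv (T x) y
    have heq : ∀ n : ℕ, (T ^ n) (T x) = (T ^ (n + 1)) x := by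
      intro n
      rw [pow_succ]
      rfl
    simp only [heq] at h1
    exact tendsto_nhds_unique h1 (hshift x y)
  -- T ∘ P = P
  have hTP : ∀ x : H, T (P x) = P x := by
    intro x
    apply ext_inner_right ℂ
    intro y
    have h1 := hconv x ((ContinuousLinearMap.adjoint T) y)
    have heq : ∀ n : ℕ, (inner ℂ ((T ^ n) x) ((ContinuousLinearMap.adjoint T) y) : ℂ)
        = inner ℂ ((T ^ (n + 1)) x) y := by
      intro n
      rw [ContinuousLinearMap.adjoint_inner_right, pow_succ']
      rfl
    simp only [heq] at h1
    have h2 := tendsto_nhds_unique h1 (hshift x y)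
    rw [ContinuousLinearMap.adjoint_inner_right] at h2
    exact h2
  -- T^n ∘ P = P
  have hpow : ∀ n : ℕ, ∀ x : H, (T ^ n) (P x) = P x := by
    intro n
    induction n with
    | zero => intro x; simp
    | succ n ih =>
      intro x
      rw [pow_succ]
      show (T ^ n) (T (P x)) = P x
      rw [hTP x, ih x]
  -- P is idempotent
  have hP2 : ∀ x : H, P (P x) = P x := by
    intro x
    apply ext_inner_right ℂ
    intro y
    have h1 := hconv (P x) y
    simp only [hpow] at h1
    exact tendsto_nhds_unique h1 tendsto_const_nhds
  refine ⟨?_, ?_, ?_, ?_⟩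
  · ext x; exact hP2 x
  · ext x; exact (hTP x).trans (hPT x).symm
  · ext x
    simp only [LinearMap.mem_range, LinearMap.mem_ker]
    constructor
    · rintro ⟨z, rfl⟩
      show P z - T (P z) = 0
      rw [hTP z, sub_self]
    · intro hx
      have hTx : T x = x := by
        have h : x - T x = 0 := hx
        have := sub_eq_zero.mp h
        exact this.symm
      have hTnx : ∀ n : ℕ, (T ^ n) x = x := by
        intro n
        induction n with
        | zero => simp
        | succ n ih => rw [pow_succ]; show (T ^ n) (T x) = x; rw [hTx, ih]
      refine ⟨x, ?_⟩
      apply ext_inner_right ℂ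
      intro y
      have h1 := hconv x y
      simp only [hTnx] at h1
      exact tendsto_nhds_unique h1 tendsto_const_nhds
  · rintro x ⟨z, rfl⟩ y
    have hx : P (((1 : H →L[ℂ] H) - P) z) = 0 := by
      have : ((1 : H →L[ℂ] H) - P) z = z - P z := rfl
      rw [this, map_sub, hP2, sub_self]
    have h1 := hconv (((1 : H →L[ℂ] H) - P) z) y
    rw [hx] at h1
    simpa using h1
end

section
/- Let H be a complex Hilbert space and let T ∈ B(H). Then T is weakly stable if and only if ker(I − T) = {0} and the power sequence {T^n} is weakly convergent (i.e., there exists A ∈ B(H) such that {T^n} converges weakly to A). -/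
open Filter Topology

/-- `T` is weakly stable if and only if `ker (I - T) = {0}` and the power sequence
`{T^n}` is weakly convergent. -/
theorem stmt2 {H : Type*} [NormedAddCommGroup H] [InnerProductSpace ℂ H] [CompleteSpace H]
    (T : H →L[ℂ] H) :
    (∀ x y : H, Tendsto (fun n : ℕ => (inner ℂ ((T ^ n) x) y : ℂ)) atTop (𝓝 (0 : ℂ)))
      ↔ LinearMap.ker ((1 - T : H →L[ℂ] H) : H →ₗ[ℂ] H) = ⊥ ∧
        ∃ A : H →L[ℂ] H, ∀ x y : H,
          Tendsto (fun n : ℕ => (inner ℂ ((T ^ n) x) y : ℂ)) atTop (𝓝 (inner ℂ (A x) y)) := by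
  constructor
  · intro h
    constructor
    · rw [Submodule.eq_bot_iff]
      intro x hx
      have hTx : T x = x := by
        have : x - T x = 0 := hx
        have := sub_eq_zero.mp this
        exact this.symm
      have hpow : ∀ n : ℕ, (T ^ n) x = x := by
        intro n
        induction n with
        | zero => simp
        | succ n ih => rw [pow_succ, ContinuousLinearMap.mul_apply, hTx, ih]
      have h1 : Tendsto (fun n : ℕ => (inner ℂ ((T ^ n) x) x : ℂ)) atTop (𝓝 (0 : ℂ)) := h x x
      have h2 : (fun n : ℕ => (inner ℂ ((T ^ n) x) x : ℂ)) = fun _ => (inner ℂ x x : ℂ) := by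
        funext n; rw [hpow n]
      rw [h2] at h1
      have : (inner ℂ x x : ℂ) = 0 := tendsto_nhds_unique tendsto_const_nhds h1
      exact inner_self_eq_zero.mp this
    · exact ⟨0, by simpa using h⟩
  · rintro ⟨hker, A, hA⟩
    have hA0 : A = 0 := by
      ext x
      have hAx : A x ∈ LinearMap.ker ((1 - T : H →L[ℂ] H) : H →ₗ[ℂ] H) := by
        have hTx : T (A x) = A x := by
          apply ext_inner_right ℂ
          intro y
          have h1 : Tendsto (fun n : ℕ => (inner ℂ ((T ^ (n + 1)) x) y : ℂ)) atTop
              (𝓝 (inner ℂ (A x) y)) :=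
            (hA x y).comp (tendsto_add_atTop_nat 1)
          have h2 : Tendsto (fun n : ℕ => (inner ℂ ((T ^ (n + 1)) x) y : ℂ)) atTop
              (𝓝 (inner ℂ (T (A x)) y)) := by
            have := hA x (ContinuousLinearMap.adjoint T y)
            rw [ContinuousLinearMap.adjoint_inner_right] at this
            have heq : (fun n : ℕ => (inner ℂ ((T ^ n) x) (ContinuousLinearMap.adjoint T y) : ℂ))
                = fun n : ℕ => (inner ℂ ((T ^ (n + 1)) x) y : ℂ) := by
              funext n
              rw [ContinuousLinearMap.adjoint_inner_right, pow_succ',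
                ContinuousLinearMap.mul_apply]
            rwa [heq] at this
          exact tendsto_nhds_unique h2 h1
        simp [LinearMap.mem_ker, sub_eq_zero, hTx]
      rw [hker, Submodule.mem_bot] at hAx
      simpa using hAx
    intro x y
    have := hA x y
    rw [hA0] at this
    simpa using this
end

section
/- Let H be a complex Hilbert space and let T, P ∈ B(H). Then ‖T^n − P‖ → 0 as n → ∞ if and only if P is a projection (P² = P) satisfying TP = PT and ran(P) = ker(I − T), and the restriction of T to ran(I − P) is uniformly stable, i.e., sup{‖T^n x‖ : x ∈ ran(I − P), ‖x‖ ≤ 1} → 0 as n → ∞. -/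
open Filter Topology

/-- `‖T^n - P‖ → 0` if and only if `P` is a projection commuting with `T` with
`ran P = ker (I - T)` and the restriction of `T` to `ran (I - P)` is uniformly stable,
i.e. `sup {‖T^n x‖ : x ∈ ran (I - P), ‖x‖ ≤ 1} → 0`. -/
theorem stmt5 {H : Type*} [NormedAddCommGroup H] [InnerProductSpace ℂ H] [CompleteSpace H]
    (T P : H →L[ℂ] H) :
    Tendsto (fun n : ℕ => ‖T ^ n - P‖) atTop (𝓝 (0 : ℝ))
      ↔ P ∘L P = P ∧ T ∘L P = P ∘L T ∧ LinearMap.range (P : H →ₗ[ℂ] H) = LinearMap.ker ((1 - T : H →L[ℂ] H) : H →ₗ[ℂ] H) ∧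
        Tendsto
          (fun n : ℕ =>
            sSup {r : ℝ | ∃ x ∈ LinearMap.range ((1 - P : H →L[ℂ] H) : H →ₗ[ℂ] H), ‖x‖ ≤ 1 ∧ r = ‖(T ^ n) x‖})
          atTop (𝓝 (0 : ℝ)) := by
  have hbdd : ∀ n : ℕ,
      BddAbove {r : ℝ | ∃ x ∈ LinearMap.range ((1 - P : H →L[ℂ] H) : H →ₗ[ℂ] H), ‖x‖ ≤ 1 ∧ r = ‖(T ^ n) x‖} := by
    intro n
    refine ⟨‖T ^ n‖, ?_⟩
    rintro r ⟨x, -, hx1, rfl⟩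
    calc ‖(T ^ n) x‖ ≤ ‖T ^ n‖ * ‖x‖ := (T ^ n).le_opNorm x
      _ ≤ ‖T ^ n‖ * 1 := by
          exact mul_le_mul_of_nonneg_left hx1 (norm_nonneg _)
      _ = ‖T ^ n‖ := mul_one _
  have hmem0 : ∀ n : ℕ,
      (0 : ℝ) ∈ {r : ℝ | ∃ x ∈ LinearMap.range ((1 - P : H →L[ℂ] H) : H →ₗ[ℂ] H), ‖x‖ ≤ 1 ∧ r = ‖(T ^ n) x‖} := by
    intro n
    exact ⟨0, Submodule.zero_mem _, by simp, by simp⟩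
  have hS0 : ∀ n : ℕ,
      (0 : ℝ) ≤ sSup {r : ℝ | ∃ x ∈ LinearMap.range ((1 - P : H →L[ℂ] H) : H →ₗ[ℂ] H), ‖x‖ ≤ 1 ∧ r = ‖(T ^ n) x‖} :=
    fun n => le_csSup (hbdd n) (hmem0 n)
  constructor
  · intro h
    have hT : Tendsto (fun n : ℕ => T ^ n) atTop (𝓝 P) := by
      rw [tendsto_iff_norm_sub_tendsto_zero]; exact h
    have hshift : Tendsto (fun n : ℕ => T ^ (n + 1)) atTop (𝓝 P) :=
      hT.comp (tendsto_add_atTop_nat 1)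
    have hTP : T * P = P := by
      have h1 : Tendsto (fun n : ℕ => T * T ^ n) atTop (𝓝 (T * P)) :=
        (tendsto_const_nhds.mul hT)
      have h2 : Tendsto (fun n : ℕ => T * T ^ n) atTop (𝓝 P) := by
        simpa [pow_succ'] using hshift
      exact tendsto_nhds_unique h1 h2
    have hPT : P * T = P := by
      have h1 : Tendsto (fun n : ℕ => T ^ n * T) atTop (𝓝 (P * T)) :=
        (hT.mul tendsto_const_nhds)
      have h2 : Tendsto (fun n : ℕ => T ^ n * T) atTop (𝓝 P) := by
        simpa [pow_succ] using hshift
      exact tendsto_nhds_unique h1 h2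
    have hTnP : ∀ n : ℕ, T ^ n * P = P := by
      intro n
      induction n with
      | zero => simp
      | succ k ih => rw [pow_succ, mul_assoc, hTP, ih]
    have hPP : P * P = P := by
      have h1 : Tendsto (fun n : ℕ => T ^ n * P) atTop (𝓝 (P * P)) :=
        hT.mul tendsto_const_nhds
      have h2 : Tendsto (fun n : ℕ => T ^ n * P) atTop (𝓝 P) := by
        simp only [hTnP]; exact (tendsto_const_nhds : Tendsto (fun _ : ℕ => P) atTop (𝓝 P))
      exact tendsto_nhds_unique h1 h2
    have hpt : ∀ x : H, Tendsto (fun n : ℕ => (T ^ n) x) atTop (𝓝 (P x)) := by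
      intro x
      rw [tendsto_iff_norm_sub_tendsto_zero]
      have hb : ∀ n : ℕ, ‖(T ^ n) x - P x‖ ≤ ‖T ^ n - P‖ * ‖x‖ := by
        intro n
        have := (T ^ n - P).le_opNorm x
        simpa using this
      refine squeeze_zero (fun n => norm_nonneg _) hb ?_
      simpa using h.mul_const ‖x‖
    refine ⟨?_, ?_, ?_, ?_⟩
    · exact hPP
    · rw [show (T ∘L P) = T * P from rfl, show (P ∘L T) = P * T from rfl, hTP, hPT]
    · ext x
      simp only [LinearMap.mem_range, LinearMap.mem_ker]
      constructor
      · rintro ⟨y, rfl⟩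
        have : T (P y) = P y := by
          have := congrFun (congrArg DFunLike.coe hTP) y
          simpa using this
        simp [ContinuousLinearMap.sub_apply, this]
      · intro hx
        have hfix : T x = x := by
          have : x - T x = 0 := by simpa [ContinuousLinearMap.sub_apply] using hx
          linear_combination (norm := abel) -this
        have hTn : ∀ n : ℕ, (T ^ n) x = x := by
          intro n
          induction n with
          | zero => simp
          | succ k ih => rw [pow_succ, ContinuousLinearMap.mul_apply, hfix, ih]
        refine ⟨x, ?_⟩
        have h1 := hpt x
        simp only [hTn] at h1
        exact tendsto_nhds_unique h1 tendsto_const_nhds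
    · refine squeeze_zero hS0 (fun n => ?_) h
      refine csSup_le ⟨0, hmem0 n⟩ ?_
      rintro r ⟨x, ⟨z, rfl⟩, hx1, rfl⟩
      have hPPz : P (P z) = P z := by
        have := congrFun (congrArg DFunLike.coe hPP) z
        simpa using this
      have : (T ^ n) ((1 - P) z) = (T ^ n - P) ((1 - P) z) := by
        simp [ContinuousLinearMap.sub_apply, hPPz]
      rw [show ((1 - P : H →L[ℂ] H) : H →ₗ[ℂ] H) z = (1 - P) z from rfl, this]
      calc ‖(T ^ n - P) ((1 - P) z)‖ ≤ ‖T ^ n - P‖ * ‖(1 - P) z‖ :=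
            (T ^ n - P).le_opNorm _
        _ ≤ ‖T ^ n - P‖ * 1 := mul_le_mul_of_nonneg_left hx1 (norm_nonneg _)
        _ = ‖T ^ n - P‖ := mul_one _
  · rintro ⟨hPP, hcomm, hrange, hsup⟩
    have hfix : ∀ x : H, T (P x) = P x := by
      intro x
      have hx : P x ∈ LinearMap.range (P : H →ₗ[ℂ] H) := ⟨x, rfl⟩
      rw [hrange, LinearMap.mem_ker] at hx
      have : P x - T (P x) = 0 := by simpa [ContinuousLinearMap.sub_apply] using hx
      linear_combination (norm := abel) -this
    have hTnP : ∀ (n : ℕ) (x : H), (T ^ n) (P x) = P x := by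
      intro n x
      induction n with
      | zero => simp
      | succ k ih => rw [pow_succ', ContinuousLinearMap.mul_apply, ih, hfix]
    set S : ℕ → ℝ := fun n =>
      sSup {r : ℝ | ∃ x ∈ LinearMap.range ((1 - P : H →L[ℂ] H) : H →ₗ[ℂ] H), ‖x‖ ≤ 1 ∧ r = ‖(T ^ n) x‖} with hS
    have key : ∀ (n : ℕ) (x : H), x ∈ LinearMap.range ((1 - P : H →L[ℂ] H) : H →ₗ[ℂ] H) → ‖(T ^ n) x‖ ≤ S n * ‖x‖ := by
      intro n x hx
      rcases eq_or_ne x 0 with rfl | hx0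
      · simp
      · have hxn : ‖x‖ ≠ 0 := norm_ne_zero_iff.mpr hx0
        set x' : H := ((‖x‖ : ℂ))⁻¹ • x with hx'
        have hx'mem : x' ∈ LinearMap.range ((1 - P : H →L[ℂ] H) : H →ₗ[ℂ] H) := by
          rcases hx with ⟨z, rfl⟩
          exact ⟨((‖(1 - P) z‖ : ℂ))⁻¹ • z, by simp [hx', map_smul]⟩
        have hx'norm : ‖x'‖ = 1 := by
          rw [hx', norm_smul]
          simp [hxn]
        have hmem : ‖(T ^ n) x'‖ ∈
            {r : ℝ | ∃ y ∈ LinearMap.range ((1 - P : H →L[ℂ] H) : H →ₗ[ℂ] H), ‖y‖ ≤ 1 ∧ r = ‖(T ^ n) y‖} :=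
          ⟨x', hx'mem, le_of_eq hx'norm, rfl⟩
        have hle : ‖(T ^ n) x'‖ ≤ S n := le_csSup (hbdd n) hmem
        have heq : ‖(T ^ n) x'‖ = ‖x‖⁻¹ * ‖(T ^ n) x‖ := by
          rw [hx', map_smul, norm_smul]
          simp
        rw [heq] at hle
        have := mul_le_mul_of_nonneg_left hle (norm_nonneg x)
        calc ‖(T ^ n) x‖ = ‖x‖ * (‖x‖⁻¹ * ‖(T ^ n) x‖) := by
              field_simp
          _ ≤ ‖x‖ * S n := this
          _ = S n * ‖x‖ := mul_comm _ _
    have hopb : ∀ n : ℕ, ‖T ^ n - P‖ ≤ S n * ‖(1 : H →L[ℂ] H) - P‖ := by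
      intro n
      refine ContinuousLinearMap.opNorm_le_bound _ (mul_nonneg (hS0 n) (norm_nonneg _)) ?_
      intro z
      have h1 : (T ^ n - P) z = (T ^ n) ((1 - P) z) := by
        rw [ContinuousLinearMap.sub_apply, ContinuousLinearMap.sub_apply, map_sub, hTnP n z,
          ContinuousLinearMap.one_apply]
      rw [h1]
      calc ‖(T ^ n) ((1 - P) z)‖ ≤ S n * ‖(1 - P) z‖ :=
            key n _ ⟨z, rfl⟩
        _ ≤ S n * (‖(1 : H →L[ℂ] H) - P‖ * ‖z‖) :=
            mul_le_mul_of_nonneg_left ((1 - P).le_opNorm z) (hS0 n)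
        _ = S n * ‖(1 : H →L[ℂ] H) - P‖ * ‖z‖ := by ring
    refine squeeze_zero (fun n => norm_nonneg _) hopb ?_
    simpa only [zero_mul] using hsup.mul_const ‖(1 : H →L[ℂ] H) - P‖
end

section
/- Let H be a complex Hilbert space and let T, P ∈ B(H). Then the power sequence {T^n} converges weakly to P if and only if there exist a complex Hilbert space K, a bounded linear bijection S : K → H with bounded inverse, and R ∈ B(K) such that T = S R S⁻¹ and the power sequence {R^n} converges weakly to an orthogonal projection Q ∈ B(K). Moreover, in that case P = S Q S⁻¹. -/
open Filter Topology

universe u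
set_option maxHeartbeats 1000000

open ContinuousLinearMap in
/-- The power sequence `{T^n}` converges weakly to `P` if and only if `T` is similar
(via a bounded bijection `S` with bounded inverse, from another Hilbert space `K`) to an
operator `R` whose power sequence converges weakly to an orthogonal projection `Q`;
moreover, in that case `P = S Q S⁻¹`. -/
theorem stmt6 {H : Type u} [NormedAddCommGroup H] [InnerProductSpace ℂ H] [CompleteSpace H]
    (T P : H →L[ℂ] H) :
    (∀ x y : H,
      Tendsto (fun n : ℕ => (inner ℂ ((T ^ n) x) y : ℂ)) atTop (𝓝 (inner ℂ (P x) y)))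
      ↔ ∃ (K : Type u) (_ : NormedAddCommGroup K) (_ : InnerProductSpace ℂ K)
          (_ : CompleteSpace K) (S : K ≃L[ℂ] H) (R Q : K →L[ℂ] K),
          T = (S : K →L[ℂ] H) ∘L R ∘L (S.symm : H →L[ℂ] K) ∧
          Q ∘L Q = Q ∧ ContinuousLinearMap.adjoint Q = Q ∧
          (∀ x y : K,
            Tendsto (fun n : ℕ => (inner ℂ ((R ^ n) x) y : ℂ)) atTop (𝓝 (inner ℂ (Q x) y))) ∧
          P = (S : K →L[ℂ] H) ∘L Q ∘L (S.symm : H →L[ℂ] K) := by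
  constructor
  · intro h
    -- Step 1: T ∘ P = P
    have hTP : ∀ x : H, T (P x) = P x := by
      intro x
      refine (ext_inner_right ℂ fun y => ?_).symm
      have lim1 : Tendsto (fun n : ℕ => (inner ℂ ((T ^ (n + 1)) x) y : ℂ)) atTop
          (𝓝 (inner ℂ (P x) y)) :=
        (tendsto_add_atTop_iff_nat 1).2 (h x y)
      have lim2 : Tendsto (fun n : ℕ => (inner ℂ ((T ^ (n + 1)) x) y : ℂ)) atTop
          (𝓝 (inner ℂ (T (P x)) y)) := by
        have := h x (adjoint T y)
        have e1 : ∀ n : ℕ, (inner ℂ ((T ^ (n + 1)) x) y : ℂ)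
            = inner ℂ ((T ^ n) x) (adjoint T y) := by
          intro n
          rw [adjoint_inner_right, pow_succ']
          rfl
        have e2 : (inner ℂ (P x) (adjoint T y) : ℂ) = inner ℂ (T (P x)) y :=
          adjoint_inner_right T (P x) y
        simpa only [e1, e2] using this
      exact tendsto_nhds_unique lim1 lim2
    -- Step 2: P is idempotent
    have hP2 : ∀ x : H, P (P x) = P x := by
      intro x
      refine ext_inner_right ℂ fun y => ?_
      have hpow : ∀ n : ℕ, (T ^ (n + 1)) (P x) = P x := by
        intro n
        induction n with
        | zero => simpa using hTP x
        | succ k ih =>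
          rw [pow_succ, ContinuousLinearMap.mul_apply, hTP, ih]
      have lim1 : Tendsto (fun n : ℕ => (inner ℂ ((T ^ n) (P x)) y : ℂ)) atTop
          (𝓝 (inner ℂ (P (P x)) y)) := h (P x) y
      have lim2 : Tendsto (fun n : ℕ => (inner ℂ ((T ^ n) (P x)) y : ℂ)) atTop
          (𝓝 (inner ℂ (P x) y)) := by
        refine tendsto_const_nhds.congr' ?_
        filter_upwards [eventually_ge_atTop 1] with n hn
        obtain ⟨k, rfl⟩ := Nat.exists_eq_add_of_le hn
        rw [add_comm, hpow]
      exact tendsto_nhds_unique lim1 lim2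
    -- The range of P as a closed submodule
    set M : Submodule ℂ H := LinearMap.ker ((ContinuousLinearMap.id ℂ H - P : H →L[ℂ] H) : H →ₗ[ℂ] H) with hMdef
    have hMmem : ∀ x : H, x ∈ M ↔ P x = x := by
      intro x
      rw [hMdef, LinearMap.mem_ker]
      show x - P x = 0 ↔ P x = x
      rw [sub_eq_zero, eq_comm]
    have hMclosed : IsClosed (M : Set H) :=
      ContinuousLinearMap.isClosed_ker _
    haveI : CompleteSpace M := hMclosed.completeSpace_coe
    set E : H →L[ℂ] H := M.subtypeL ∘L M.orthogonalProjectionOnto with hEdef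
    have hPE : ∀ x : H, P (E x) = E x := by
      intro x
      exact (hMmem _).1 (M.orthogonalProjectionOnto x).2
    have hEfix : ∀ x : H, x ∈ M → E x = x := by
      intro x hx
      have := Submodule.orthogonalProjectionOnto_mem_subspace_eq_self (⟨x, hx⟩ : M)
      simpa [hEdef] using congrArg (Subtype.val) this
    have hEP : ∀ x : H, E (P x) = P x := fun x => hEfix _ ((hMmem _).2 (hP2 x))
    have hEE : ∀ x : H, E (E x) = E x := fun x => hEfix _ (M.orthogonalProjectionOnto x).2
    -- The similarity
    set Sf : H →L[ℂ] H := ContinuousLinearMap.id ℂ H + E - P with hSfdef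
    set Wf : H →L[ℂ] H := ContinuousLinearMap.id ℂ H - E + P with hWfdef
    have hSf : ∀ x : H, Sf x = x + E x - P x := fun x => rfl
    have hWf : ∀ x : H, Wf x = x - E x + P x := fun x => rfl
    have hWS : ∀ x : H, Wf (Sf x) = x := by
      intro x
      simp only [hSf, hWf, map_add, map_sub, hPE, hEE, hEP, hP2]
      abel
    have hSW : ∀ x : H, Sf (Wf x) = x := by
      intro x
      simp only [hSf, hWf, map_add, map_sub, hPE, hEE, hEP, hP2]
      abel
    set S : H ≃L[ℂ] H := ContinuousLinearEquiv.equivOfInverse Sf Wf hWS hSW with hSdef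
    have hScoe : (S : H →L[ℂ] H) = Sf := rfl
    have hSsymm : (S.symm : H →L[ℂ] H) = Wf := rfl
    set R : H →L[ℂ] H := Wf ∘L T ∘L Sf with hRdef
    refine ⟨H, ‹_›, ‹_›, ‹_›, S, R, E, ?_, ?_, ?_, ?_, ?_⟩
    · ext x
      simp [hRdef, hScoe, hSsymm, hSW]
    · ext x
      exact hEE x
    · have : IsSelfAdjoint E := isSelfAdjoint_starProjection M
      rw [← ContinuousLinearMap.star_eq_adjoint]
      exact this
    · intro x y
      have hRn : ∀ (n : ℕ) (x : H), (R ^ n) x = Wf ((T ^ n) (Sf x)) := by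
        intro n
        induction n with
        | zero => intro x; simp [hWS x]
        | succ k ih =>
          intro x
          rw [pow_succ, ContinuousLinearMap.mul_apply, pow_succ, ContinuousLinearMap.mul_apply]
          rw [show R x = Wf (T (Sf x)) from rfl, ih, hSW]
      have hPSf : ∀ x : H, P (Sf x) = E x := by
        intro x
        simp only [hSf, map_add, map_sub, hPE, hP2]
        abel
      have key := h (Sf x) (adjoint Wf y)
      have e1 : ∀ n : ℕ, (inner ℂ ((T ^ n) (Sf x)) (adjoint Wf y) : ℂ)
          = inner ℂ ((R ^ n) x) y := by
        intro n
        rw [adjoint_inner_right, hRn]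
      have e2 : (inner ℂ (P (Sf x)) (adjoint Wf y) : ℂ) = inner ℂ (E x) y := by
        rw [adjoint_inner_right, hPSf]
        have : Wf (E x) = E x := by
          simp only [hWf, hEE, hPE]; abel
        rw [this]
      simpa only [e1, e2] using key
    · ext x
      have : P (Sf x) = Sf (E x) := by
        simp only [hSf, map_add, map_sub, hPE, hP2, hEE, hEP]
        abel
      have h2 : Sf (E (Wf x)) = P x := by
        have hEWf : E (Wf x) = P x := by
          simp only [hWf, map_add, map_sub, hEE, hEP]; abel
        rw [hEWf]
        simp only [hSf, hEP, hP2]; abel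
      simp [hScoe, hSsymm, h2.symm]
  · rintro ⟨K, _, _, _, S, R, Q, hT, hQ2, hQadj, hRQ, hP⟩
    intro x y
    have hTn : ∀ (n : ℕ) (x : H), (T ^ n) x = S ((R ^ n) (S.symm x)) := by
      intro n
      induction n with
      | zero => intro x; simp
      | succ k ih =>
        intro x
        rw [pow_succ, ContinuousLinearMap.mul_apply, pow_succ, ContinuousLinearMap.mul_apply,
          show T x = S (R (S.symm x)) from by rw [hT]; rfl, ih]
        simp
    have key := hRQ (S.symm x) (adjoint (S : K →L[ℂ] H) y)
    have e1 : ∀ n : ℕ, (inner ℂ ((R ^ n) (S.symm x)) (adjoint (S : K →L[ℂ] H) y) : ℂ)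
        = inner ℂ ((T ^ n) x) y := by
      intro n
      rw [adjoint_inner_right, hTn]
      rfl
    have e2 : (inner ℂ (Q (S.symm x)) (adjoint (S : K →L[ℂ] H) y) : ℂ) = inner ℂ (P x) y := by
      rw [adjoint_inner_right, hP]
      rfl
    simpa only [e1, e2] using key
end

section
/- Let H be a complex Hilbert space and let T ∈ B(H). The following conditions are equivalent: (i) ker(I − T) reduces T; (ii) T* x = x for every x ∈ ker(I − T); (iii) ‖T* x‖ = ‖x‖ for every x ∈ ker(I − T); (iv) ker(I − T) ⊆ ker(I − T*). -/
open Filter Topology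

open scoped InnerProductSpace

private lemma memker {H : Type*} [NormedAddCommGroup H] [InnerProductSpace ℂ H]
    (T : H →L[ℂ] H) (x : H) : x ∈ LinearMap.ker ((1 - T : H →L[ℂ] H) : H →ₗ[ℂ] H) ↔ T x = x := by
  constructor
  · intro h
    have h' : x - T x = 0 := by simpa using h
    exact (sub_eq_zero.mp h').symm
  · intro h
    simp [LinearMap.mem_ker, h]

private lemma auxeq {H : Type*} [NormedAddCommGroup H] [InnerProductSpace ℂ H] [CompleteSpace H]
    (T : H →L[ℂ] H) (x : H) (hx : T x = x)
    (h : ‖ContinuousLinearMap.adjoint T x‖ = ‖x‖) : ContinuousLinearMap.adjoint T x = x := by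
  have key : ⟪ContinuousLinearMap.adjoint T x, x⟫_ℂ = ⟪x, x⟫_ℂ := by
    rw [ContinuousLinearMap.adjoint_inner_left, hx]
  have h2 : ‖ContinuousLinearMap.adjoint T x - x‖ ^ 2 = 0 := by
    rw [@norm_sub_sq ℂ, h, key, inner_self_eq_norm_sq]
    ring
  have := pow_eq_zero_iff (n := 2) (by norm_num) |>.mp h2
  rwa [norm_eq_zero, sub_eq_zero] at this

/-- For `T ∈ B(H)` the following are equivalent: (i) `ker (I - T)` reduces `T`;
(ii) `T* x = x` for every `x ∈ ker (I - T)`; (iii) `‖T* x‖ = ‖x‖` for every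
`x ∈ ker (I - T)`; (iv) `ker (I - T) ⊆ ker (I - T*)`. -/
theorem stmt7 {H : Type*} [NormedAddCommGroup H] [InnerProductSpace ℂ H] [CompleteSpace H]
    (T : H →L[ℂ] H) :
    List.TFAE
      [ (∀ x ∈ LinearMap.ker ((1 - T : H →L[ℂ] H) : H →ₗ[ℂ] H), T x ∈ LinearMap.ker ((1 - T : H →L[ℂ] H) : H →ₗ[ℂ] H)) ∧
          (∀ x ∈ LinearMap.ker ((1 - T : H →L[ℂ] H) : H →ₗ[ℂ] H),
            ContinuousLinearMap.adjoint T x ∈ LinearMap.ker ((1 - T : H →L[ℂ] H) : H →ₗ[ℂ] H)),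
        ∀ x ∈ LinearMap.ker ((1 - T : H →L[ℂ] H) : H →ₗ[ℂ] H), ContinuousLinearMap.adjoint T x = x,
        ∀ x ∈ LinearMap.ker ((1 - T : H →L[ℂ] H) : H →ₗ[ℂ] H), ‖ContinuousLinearMap.adjoint T x‖ = ‖x‖,
        LinearMap.ker ((1 - T : H →L[ℂ] H) : H →ₗ[ℂ] H) ≤ LinearMap.ker ((1 - ContinuousLinearMap.adjoint T : H →L[ℂ] H) : H →ₗ[ℂ] H) ] := by
  tfae_have 1 → 2 := by
    rintro ⟨-, h⟩ x hx
    have hx' : T x = x := (memker T x).mp hx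
    have hTT : T (ContinuousLinearMap.adjoint T x) = ContinuousLinearMap.adjoint T x :=
      (memker T _).mp (h x hx)
    apply auxeq T x hx'
    have hinner : ⟪ContinuousLinearMap.adjoint T x, ContinuousLinearMap.adjoint T x⟫_ℂ
        = ⟪x, x⟫_ℂ := by
      calc ⟪ContinuousLinearMap.adjoint T x, ContinuousLinearMap.adjoint T x⟫_ℂ
          = ⟪x, T (ContinuousLinearMap.adjoint T x)⟫_ℂ := by
            rw [ContinuousLinearMap.adjoint_inner_left]
        _ = ⟪x, ContinuousLinearMap.adjoint T x⟫_ℂ := by rw [hTT]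
        _ = ⟪T x, x⟫_ℂ := by rw [ContinuousLinearMap.adjoint_inner_right]
        _ = ⟪x, x⟫_ℂ := by rw [hx']
    have hsq : ‖ContinuousLinearMap.adjoint T x‖ ^ 2 = ‖x‖ ^ 2 := by
      rw [← @inner_self_eq_norm_sq ℂ, ← @inner_self_eq_norm_sq ℂ, hinner]
    rw [← Real.sqrt_sq (norm_nonneg _), ← Real.sqrt_sq (norm_nonneg x), hsq]
  tfae_have 2 → 3 := fun h x hx => by rw [h x hx]
  tfae_have 3 → 2 := fun h x hx => auxeq T x ((memker T x).mp hx) (h x hx)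
  tfae_have 2 → 4 := by
    intro h x hx
    have h1 : (1 - ContinuousLinearMap.adjoint T) x
        = x - ContinuousLinearMap.adjoint T x := rfl
    rw [LinearMap.mem_ker, ContinuousLinearMap.coe_coe, h1, h x hx, sub_self]
  tfae_have 4 → 2 := by
    intro h x hx
    have h2 := h hx
    rw [LinearMap.mem_ker] at h2
    have h1 : (1 - ContinuousLinearMap.adjoint T) x
        = x - ContinuousLinearMap.adjoint T x := rfl
    rw [ContinuousLinearMap.coe_coe, h1, sub_eq_zero] at h2
    exact h2.symm
  tfae_have 2 → 1 := by
    intro h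
    refine ⟨fun x hx => ?_, fun x hx => ?_⟩
    · rwa [(memker T x).mp hx]
    · rwa [h x hx]
  tfae_finish
end

section
/- Let H be a complex Hilbert space and suppose T, P ∈ B(H) are such that the power sequence {T^n} converges weakly to P. Then the following statements are equivalent: (i) P is an orthogonal projection (P² = P and P* = P); (ii) ker(I − T) = ker(I − T*); (iii) ker(I − T) reduces T. Moreover, if (i) holds, then P is the orthogonal projection of H onto ker(I − T). -/
open Filter Topology

lemma weak_limit_facts8 {H : Type*} [NormedAddCommGroup H] [InnerProductSpace ℂ H]
    [CompleteSpace H] (T P : H →L[ℂ] H)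
    (hconv : ∀ x y : H,
      Tendsto (fun n : ℕ => (inner ℂ ((T ^ n) x) y : ℂ)) atTop (𝓝 (inner ℂ (P x) y))) :
    (∀ x, T (P x) = P x) ∧ (∀ x, P (T x) = P x) ∧ (∀ x, T x = x → P x = x) := by
  have hshift : ∀ x y : H,
      Tendsto (fun n : ℕ => (inner ℂ ((T ^ (n + 1)) x) y : ℂ)) atTop (𝓝 (inner ℂ (P x) y)) :=
    fun x y => (hconv x y).comp (tendsto_add_atTop_nat 1)
  refine ⟨?_, ?_, ?_⟩
  · intro x
    apply ext_inner_right ℂ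
    intro y
    have h1 := hconv x ((ContinuousLinearMap.adjoint T) y)
    have h2 : ∀ n : ℕ, (inner ℂ ((T ^ n) x) ((ContinuousLinearMap.adjoint T) y) : ℂ)
        = inner ℂ ((T ^ (n + 1)) x) y := by
      intro n
      rw [ContinuousLinearMap.adjoint_inner_right, pow_succ']
      rfl
    simp_rw [h2] at h1
    have h3 := tendsto_nhds_unique h1 (hshift x y)
    rw [← ContinuousLinearMap.adjoint_inner_right T (P x) y]
    exact h3
  · intro x
    apply ext_inner_right ℂ
    intro y
    have h1 := hconv (T x) y
    have h2 : ∀ n : ℕ, (inner ℂ ((T ^ n) (T x)) y : ℂ) = inner ℂ ((T ^ (n + 1)) x) y := by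
      intro n
      rw [pow_succ]
      rfl
    simp_rw [h2] at h1
    exact tendsto_nhds_unique h1 (hshift x y)
  · intro x hx
    apply ext_inner_right ℂ
    intro y
    have hxn : ∀ n : ℕ, (T ^ n) x = x := by
      intro n
      induction n with
      | zero => simp
      | succ n ih => rw [pow_succ']; show T ((T ^ n) x) = x; rw [ih, hx]
    have h1 := hconv x y
    simp_rw [hxn] at h1
    exact tendsto_nhds_unique h1 tendsto_const_nhds

/-- Suppose `{T^n}` converges weakly to `P`. Then the following are equivalent:
(i) `P` is an orthogonal projection; (ii) `ker (I - T) = ker (I - T*)`;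
(iii) `ker (I - T)` reduces `T`. Moreover, if (i) holds, then `P` is the orthogonal
projection of `H` onto `ker (I - T)`. -/
theorem stmt8 {H : Type*} [NormedAddCommGroup H] [InnerProductSpace ℂ H] [CompleteSpace H]
    (T P : H →L[ℂ] H)
    (hconv : ∀ x y : H,
      Tendsto (fun n : ℕ => (inner ℂ ((T ^ n) x) y : ℂ)) atTop (𝓝 (inner ℂ (P x) y))) :
    List.TFAE
      [ P ∘L P = P ∧ ContinuousLinearMap.adjoint P = P,
        LinearMap.ker ((1 - T : H →L[ℂ] H) : H →ₗ[ℂ] H) = LinearMap.ker ((1 - ContinuousLinearMap.adjoint T : H →L[ℂ] H) : H →ₗ[ℂ] H),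
        (∀ x ∈ LinearMap.ker ((1 - T : H →L[ℂ] H) : H →ₗ[ℂ] H), T x ∈ LinearMap.ker ((1 - T : H →L[ℂ] H) : H →ₗ[ℂ] H)) ∧
          (∀ x ∈ LinearMap.ker ((1 - T : H →L[ℂ] H) : H →ₗ[ℂ] H),
            ContinuousLinearMap.adjoint T x ∈ LinearMap.ker ((1 - T : H →L[ℂ] H) : H →ₗ[ℂ] H)) ] ∧
    ((P ∘L P = P ∧ ContinuousLinearMap.adjoint P = P) →
      LinearMap.range (P : H →ₗ[ℂ] H) = LinearMap.ker ((1 - T : H →L[ℂ] H) : H →ₗ[ℂ] H)) := by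
  set S := ContinuousLinearMap.adjoint T with hSdef
  set Q := ContinuousLinearMap.adjoint P with hQdef
  obtain ⟨hTP, hPT, hfix⟩ := weak_limit_facts8 T P hconv
  -- adjoint powers converge weakly to Q
  have hconv' : ∀ x y : H,
      Tendsto (fun n : ℕ => (inner ℂ ((S ^ n) x) y : ℂ)) atTop (𝓝 (inner ℂ (Q x) y)) := by
    intro x y
    have h := (hconv y x).star
    have e1 : ∀ n : ℕ, (inner ℂ ((S ^ n) x) y : ℂ) = star (inner ℂ ((T ^ n) y) x : ℂ) := by
      intro n
      rw [hSdef, ← ContinuousLinearMap.star_eq_adjoint, ← star_pow,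
        ContinuousLinearMap.star_eq_adjoint, ContinuousLinearMap.adjoint_inner_left,
        RCLike.star_def, inner_conj_symm]
    have e2 : (inner ℂ (Q x) y : ℂ) = star (inner ℂ (P y) x : ℂ) := by
      rw [hQdef, ContinuousLinearMap.adjoint_inner_left, RCLike.star_def, inner_conj_symm]
    simp_rw [e1, e2]
    exact h
  obtain ⟨hSQ, hQS, hfix'⟩ := weak_limit_facts8 S Q hconv'
  have memT : ∀ x : H, x ∈ LinearMap.ker ((1 - T : H →L[ℂ] H) : H →ₗ[ℂ] H) ↔ T x = x := by
    intro x
    rw [LinearMap.mem_ker, ContinuousLinearMap.coe_coe, ContinuousLinearMap.sub_apply, ContinuousLinearMap.one_apply,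
      sub_eq_zero, eq_comm]
  have memS : ∀ x : H, x ∈ LinearMap.ker ((1 - S : H →L[ℂ] H) : H →ₗ[ℂ] H) ↔ S x = x := by
    intro x
    rw [LinearMap.mem_ker, ContinuousLinearMap.coe_coe, ContinuousLinearMap.sub_apply, ContinuousLinearMap.one_apply,
      sub_eq_zero, eq_comm]
  have hPP : ∀ x, P (P x) = P x := fun x => hfix _ (hTP x)
  have hQQ : ∀ x, Q (Q x) = Q x := fun x => hfix' _ (hSQ x)
  have iQ : ∀ x y : H, (inner ℂ (Q x) y : ℂ) = inner ℂ x (P y) := fun x y =>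
    ContinuousLinearMap.adjoint_inner_left P y x
  have iP : ∀ x y : H, (inner ℂ (P x) y : ℂ) = inner ℂ x (Q y) := fun x y =>
    (ContinuousLinearMap.adjoint_inner_right P x y).symm
  -- key step for (iii) → (ii):
  have key32 : ((∀ x ∈ LinearMap.ker ((1 - T : H →L[ℂ] H) : H →ₗ[ℂ] H), T x ∈ LinearMap.ker ((1 - T : H →L[ℂ] H) : H →ₗ[ℂ] H)) ∧
      (∀ x ∈ LinearMap.ker ((1 - T : H →L[ℂ] H) : H →ₗ[ℂ] H), S x ∈ LinearMap.ker ((1 - T : H →L[ℂ] H) : H →ₗ[ℂ] H))) →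
      ∀ x : H, T x = x → S x = x := by
    rintro ⟨-, h3⟩ x hx
    -- (S^n) x stays in ker (1 - T)
    have hzn : ∀ n : ℕ, T ((S ^ n) x) = (S ^ n) x := by
      intro n
      induction n with
      | zero => simpa using hx
      | succ n ih =>
        have := (memT _).1 (h3 _ ((memT _).2 ih))
        rw [pow_succ']
        exact this
    -- hence the weak limit Q x is in ker (1 - T)
    have hTQx : T (Q x) = Q x := by
      apply ext_inner_right ℂ
      intro y
      have l1 := hconv' x (S y)
      have l2 : ∀ n : ℕ, (inner ℂ ((S ^ n) x) (S y) : ℂ) = inner ℂ ((S ^ n) x) y := by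
        intro n
        rw [hSdef, ContinuousLinearMap.adjoint_inner_right, hzn n]
      simp_rw [l2] at l1
      have := tendsto_nhds_unique l1 (hconv' x y)
      rw [← ContinuousLinearMap.adjoint_inner_right T (Q x) y]
      exact this
    -- norm argument : Q x = x
    have hPx : P x = x := hfix x hx
    have hPQx : P (Q x) = Q x := hfix _ hTQx
    have e1 : (inner ℂ (Q x) x : ℂ) = inner ℂ x x := by rw [iQ, hPx]
    have e2 : (inner ℂ x (Q x) : ℂ) = inner ℂ x x := by
      rw [← inner_conj_symm, e1, inner_self_conj]
    have e3 : (inner ℂ (Q x) (Q x) : ℂ) = inner ℂ x x := by rw [iQ, hPQx, e2]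
    have hz : (inner ℂ (x - Q x) (x - Q x) : ℂ) = 0 := by
      rw [inner_sub_left, inner_sub_right, inner_sub_right, e1, e2, e3]
      ring
    have hQx : Q x = x := by
      have := inner_self_eq_zero.mp hz
      rw [sub_eq_zero] at this
      exact this.symm
    have := hSQ x
    rwa [hQx] at this
  -- converse inclusion from the forward one
  have key22 : (∀ x : H, T x = x → S x = x) → ∀ x : H, S x = x → T x = x := by
    intro sub x hx
    have hQx : Q x = x := hfix' x hx
    have hQPx : Q (P x) = P x := hfix' _ (sub _ (hTP x))
    have e1 : (inner ℂ (P x) x : ℂ) = inner ℂ x x := by rw [iP, hQx]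
    have e2 : (inner ℂ x (P x) : ℂ) = inner ℂ x x := by
      rw [← inner_conj_symm, e1, inner_self_conj]
    have e3 : (inner ℂ (P x) (P x) : ℂ) = inner ℂ x x := by rw [iP, hQPx, e2]
    have hz : (inner ℂ (x - P x) (x - P x) : ℂ) = 0 := by
      rw [inner_sub_left, inner_sub_right, inner_sub_right, e1, e2, e3]
      ring
    have hPx : P x = x := by
      have := inner_self_eq_zero.mp hz
      rw [sub_eq_zero] at this
      exact this.symm
    have := hTP x
    rwa [hPx] at this
  constructor
  · tfae_have 1 → 2 := by
      rintro ⟨-, hQP⟩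
      ext x
      rw [memT, memS]
      constructor
      · intro hx
        have hQx : Q x = x := by rw [hQP]; exact hfix x hx
        have := hSQ x
        rwa [hQx] at this
      · intro hx
        have hPx : P x = x := by rw [← hQP]; exact hfix' x hx
        have := hTP x
        rwa [hPx] at this
    tfae_have 2 → 3 := by
      intro h2
      constructor
      · intro x hx
        rw [memT] at hx ⊢
        rw [hx]
        exact hx
      · intro x hx
        have hx' : S x = x := (memS x).1 (h2 ▸ hx)
        show S x ∈ _
        rw [hx']
        exact hx
    tfae_have 3 → 2 := by
      intro h3
      have sub := key32 h3
      ext x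
      rw [memT, memS]
      exact ⟨sub x, key22 sub x⟩
    tfae_have 2 → 1 := by
      intro h2
      have heq : ∀ z : H, T z = z ↔ S z = z := by
        intro z
        rw [← memT, ← memS, h2]
      refine ⟨ContinuousLinearMap.ext hPP, ?_⟩
      ext x
      apply ext_inner_right ℂ
      intro y
      -- show Q x = P x via inner products; we show inner ℂ (Qx - Px, Qx - Px) = 0 first
      have hPQx : P (Q x) = Q x := hfix _ ((heq _).2 (hSQ x))
      have hQPx : Q (P x) = P x := hfix' _ ((heq _).1 (hTP x))
      have a1 : (inner ℂ (Q x) (Q x) : ℂ) = inner ℂ x (Q x) := by rw [iQ, hPQx]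
      have a2 : (inner ℂ (Q x) (P x) : ℂ) = inner ℂ x (P x) := by rw [iQ, hPP]
      have a3 : (inner ℂ (P x) (Q x) : ℂ) = inner ℂ x (Q x) := by rw [iP, hQQ]
      have a4 : (inner ℂ (P x) (P x) : ℂ) = inner ℂ x (P x) := by rw [iP, hQPx]
      have hz : (inner ℂ (Q x - P x) (Q x - P x) : ℂ) = 0 := by
        rw [inner_sub_left, inner_sub_right, inner_sub_right, a1, a2, a3, a4]
        ring
      have : Q x = P x := by
        have := inner_self_eq_zero.mp hz
        rwa [sub_eq_zero] at this
      rw [this]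
    tfae_finish
  · rintro ⟨-, -⟩
    ext x
    rw [LinearMap.mem_range, memT]
    constructor
    · rintro ⟨y, rfl⟩
      exact hTP y
    · intro hx
      exact ⟨x, hfix x hx⟩
end

section
/- Let H be a complex Hilbert space and let T ∈ B(H) be such that ker(I − T) is properly contained in ker(I − T*) (i.e., ker(I − T) ⊆ ker(I − T*) and ker(I − T) ≠ ker(I − T*)). Then ker(I − T) reduces T, the power sequence {T^n} does not converge weakly to any orthogonal projection, and T is not weakly stable. -/
open Filter Topology

/-- If `ker (I - T)` is properly contained in `ker (I - T*)`, then `ker (I - T)` reduces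
`T`, the power sequence `{T^n}` is not weakly convergent to an orthogonal projection,
and `T` is not weakly stable. -/
theorem stmt9 {H : Type*} [NormedAddCommGroup H] [InnerProductSpace ℂ H] [CompleteSpace H]
    (T : H →L[ℂ] H)
    (hsub : LinearMap.ker ((1 - T : H →L[ℂ] H) : H →ₗ[ℂ] H) ≤ LinearMap.ker ((1 - ContinuousLinearMap.adjoint T : H →L[ℂ] H) : H →ₗ[ℂ] H))
    (hne : LinearMap.ker ((1 - T : H →L[ℂ] H) : H →ₗ[ℂ] H) ≠ LinearMap.ker ((1 - ContinuousLinearMap.adjoint T : H →L[ℂ] H) : H →ₗ[ℂ] H)) :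
    ((∀ x ∈ LinearMap.ker ((1 - T : H →L[ℂ] H) : H →ₗ[ℂ] H), T x ∈ LinearMap.ker ((1 - T : H →L[ℂ] H) : H →ₗ[ℂ] H)) ∧
      (∀ x ∈ LinearMap.ker ((1 - T : H →L[ℂ] H) : H →ₗ[ℂ] H),
        ContinuousLinearMap.adjoint T x ∈ LinearMap.ker ((1 - T : H →L[ℂ] H) : H →ₗ[ℂ] H))) ∧
    (¬ ∃ P : H →L[ℂ] H, (P ∘L P = P ∧ ContinuousLinearMap.adjoint P = P) ∧
      ∀ x y : H,
        Tendsto (fun n : ℕ => (inner ℂ ((T ^ n) x) y : ℂ)) atTop (𝓝 (inner ℂ (P x) y))) ∧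
    ¬ (∀ x y : H, Tendsto (fun n : ℕ => (inner ℂ ((T ^ n) x) y : ℂ)) atTop (𝓝 (0 : ℂ))) := by
  have hmemT : ∀ x : H, x ∈ LinearMap.ker ((1 - T : H →L[ℂ] H) : H →ₗ[ℂ] H) ↔ T x = x := by
    intro x
    rw [LinearMap.mem_ker, ContinuousLinearMap.coe_coe, ContinuousLinearMap.sub_apply, ContinuousLinearMap.one_apply,
      sub_eq_zero, eq_comm]
  have hmemT' : ∀ x : H, x ∈ LinearMap.ker ((1 - ContinuousLinearMap.adjoint T : H →L[ℂ] H) : H →ₗ[ℂ] H) ↔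
      ContinuousLinearMap.adjoint T x = x := by
    intro x
    rw [LinearMap.mem_ker, ContinuousLinearMap.coe_coe, ContinuousLinearMap.sub_apply, ContinuousLinearMap.one_apply,
      sub_eq_zero, eq_comm]
  obtain ⟨z, hz1, hz2⟩ : ∃ z ∈ LinearMap.ker ((1 - ContinuousLinearMap.adjoint T : H →L[ℂ] H) : H →ₗ[ℂ] H),
      z ∉ LinearMap.ker ((1 - T : H →L[ℂ] H) : H →ₗ[ℂ] H) := by
    by_contra h
    push_neg at h
    exact hne (le_antisymm hsub h)
  have hTz : ContinuousLinearMap.adjoint T z = z := (hmemT' z).mp hz1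
  have key : ∀ (x : H) (n : ℕ), (inner ℂ ((T ^ n) x) z : ℂ) = inner ℂ x z := by
    intro x n
    induction n with
    | zero => simp
    | succ n ih =>
      have h1 : (inner ℂ ((T ^ (n + 1)) x) z : ℂ)
          = inner ℂ ((T ^ n) x) (ContinuousLinearMap.adjoint T z) := by
        rw [ContinuousLinearMap.adjoint_inner_right, pow_succ']
        simp [ContinuousLinearMap.mul_apply]
      rw [h1, hTz, ih]
  refine ⟨⟨?_, ?_⟩, ?_, ?_⟩
  · intro x hx
    rw [hmemT] at hx ⊢
    rw [hx]
    exact hx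
  · intro x hx
    have hax : ContinuousLinearMap.adjoint T x = x := (hmemT' x).mp (hsub hx)
    rw [hmemT] at hx ⊢
    rw [hax]
    exact hx
  · rintro ⟨P, ⟨hP2, hPsa⟩, hconv⟩
    have hTP : ∀ x : H, T (P x) = P x := by
      intro x
      apply ext_inner_right ℂ
      intro y
      have h1 : Tendsto (fun n : ℕ => (inner ℂ ((T ^ (n + 1)) x) y : ℂ)) atTop
          (𝓝 (inner ℂ (P x) y)) := (hconv x y).comp (tendsto_add_atTop_nat 1)
      have heq : ∀ n : ℕ, (inner ℂ ((T ^ (n + 1)) x) y : ℂ)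
          = inner ℂ ((T ^ n) x) (ContinuousLinearMap.adjoint T y) := by
        intro n
        rw [ContinuousLinearMap.adjoint_inner_right, pow_succ']
        simp [ContinuousLinearMap.mul_apply]
      have h2 : Tendsto (fun n : ℕ => (inner ℂ ((T ^ (n + 1)) x) y : ℂ)) atTop
          (𝓝 (inner ℂ (T (P x)) y)) := by
        simp only [heq]
        have := hconv x (ContinuousLinearMap.adjoint T y)
        rwa [ContinuousLinearMap.adjoint_inner_right] at this
      exact tendsto_nhds_unique h2 h1
    have hPz : P z = z := by
      apply ext_inner_left ℂ
      intro x
      have h1 : Tendsto (fun n : ℕ => (inner ℂ ((T ^ n) x) z : ℂ)) atTop (𝓝 (inner ℂ x z)) := by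
        simp only [key x]
        exact tendsto_const_nhds
      have h2 : (inner ℂ (P x) z : ℂ) = inner ℂ x z := tendsto_nhds_unique (hconv x z) h1
      calc (inner ℂ x (P z) : ℂ) = inner ℂ (ContinuousLinearMap.adjoint P x) z := by
            rw [ContinuousLinearMap.adjoint_inner_left]
        _ = inner ℂ (P x) z := by rw [hPsa]
        _ = inner ℂ x z := h2
    have hzker : z ∈ LinearMap.ker ((1 - T : H →L[ℂ] H) : H →ₗ[ℂ] H) := by
      rw [hmemT]
      rw [← hPz]
      exact hTP z
    exact hz2 hzker
  · intro h
    have h1 : Tendsto (fun n : ℕ => (inner ℂ ((T ^ n) z) z : ℂ)) atTop (𝓝 (inner ℂ z z)) := by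
      simp only [key z]
      exact tendsto_const_nhds
    have h2 : (inner ℂ z z : ℂ) = 0 := tendsto_nhds_unique h1 (h z z)
    have hz0 : z = 0 := inner_self_eq_zero.mp h2
    exact hz2 (by rw [hz0]; exact zero_mem _)
end

section
/- Let H be a complex Hilbert space and let T ∈ B(H) be an operator such that ker(I − T) reduces T. Then the power sequence {T^n} is weakly convergent if and only if ⟨T^n x, y⟩ → 0 as n → ∞ for every x in the orthogonal complement ker(I − T)^⊥ and every y ∈ H; and if this is the case, then the weak limit of {T^n} is the orthogonal projection of H onto ker(I − T) and ker(I − T) = ker(I − T*). -/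
open Filter Topology

section Aux

variable {H : Type*} [NormedAddCommGroup H] [InnerProductSpace ℂ H] [CompleteSpace H]

local notation "⟪" x ", " y "⟫" => @inner ℂ _ _ x y

lemma memKer_iff (T : H →L[ℂ] H) (x : H) : x ∈ LinearMap.ker ((1 - T : H →L[ℂ] H) : H →ₗ[ℂ] H) ↔ T x = x := by
  rw [LinearMap.mem_ker, ContinuousLinearMap.coe_coe, ContinuousLinearMap.sub_apply, ContinuousLinearMap.one_apply,
    sub_eq_zero, eq_comm]

lemma pow_fix (T : H →L[ℂ] H) {x : H} (hx : T x = x) (n : ℕ) : (T ^ n) x = x := by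
  induction n with
  | zero => simp
  | succ n ih => rw [pow_succ, ContinuousLinearMap.mul_apply, hx, ih]

lemma perp_inv (T : H →L[ℂ] H)
    (hred2 : ∀ x ∈ LinearMap.ker ((1 - T : H →L[ℂ] H) : H →ₗ[ℂ] H),
      ContinuousLinearMap.adjoint T x ∈ LinearMap.ker ((1 - T : H →L[ℂ] H) : H →ₗ[ℂ] H))
    {x : H} (hx : x ∈ (LinearMap.ker ((1 - T : H →L[ℂ] H) : H →ₗ[ℂ] H))ᗮ) : T x ∈ (LinearMap.ker ((1 - T : H →L[ℂ] H) : H →ₗ[ℂ] H))ᗮ := by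
  rw [Submodule.mem_orthogonal] at hx ⊢
  intro u hu
  rw [← ContinuousLinearMap.adjoint_inner_left]
  exact hx _ (hred2 u hu)

lemma pow_perp_inv (T : H →L[ℂ] H)
    (hred2 : ∀ x ∈ LinearMap.ker ((1 - T : H →L[ℂ] H) : H →ₗ[ℂ] H),
      ContinuousLinearMap.adjoint T x ∈ LinearMap.ker ((1 - T : H →L[ℂ] H) : H →ₗ[ℂ] H))
    {x : H} (hx : x ∈ (LinearMap.ker ((1 - T : H →L[ℂ] H) : H →ₗ[ℂ] H))ᗮ) (n : ℕ) :
    (T ^ n) x ∈ (LinearMap.ker ((1 - T : H →L[ℂ] H) : H →ₗ[ℂ] H))ᗮ := by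
  induction n with
  | zero => simpa using hx
  | succ n ih =>
    rw [pow_succ', ContinuousLinearMap.mul_apply]
    exact perp_inv T hred2 ih

/-- If the weak limit operator `A` exists, it vanishes on `Mᗮ`. -/
lemma limit_zero_on_perp (T : H →L[ℂ] H)
    (hred2 : ∀ x ∈ LinearMap.ker ((1 - T : H →L[ℂ] H) : H →ₗ[ℂ] H),
      ContinuousLinearMap.adjoint T x ∈ LinearMap.ker ((1 - T : H →L[ℂ] H) : H →ₗ[ℂ] H))
    (A : H →L[ℂ] H)
    (hA : ∀ x y : H,
      Tendsto (fun n : ℕ => (inner ℂ ((T ^ n) x) y : ℂ)) atTop (𝓝 (inner ℂ (A x) y)))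
    {x : H} (hx : x ∈ (LinearMap.ker ((1 - T : H →L[ℂ] H) : H →ₗ[ℂ] H))ᗮ) : A x = 0 := by
  -- A x ∈ Mᗮ
  have h1 : A x ∈ (LinearMap.ker ((1 - T : H →L[ℂ] H) : H →ₗ[ℂ] H))ᗮ := by
    rw [Submodule.mem_orthogonal]
    intro u hu
    rw [inner_eq_zero_symm]
    refine tendsto_nhds_unique (hA x u) ?_
    have : (fun n : ℕ => (⟪(T ^ n) x, u⟫ : ℂ)) = fun _ => (0 : ℂ) := by
      funext n
      rw [inner_eq_zero_symm]
      exact (Submodule.mem_orthogonal _ _).1 (pow_perp_inv T hred2 hx n) u hu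
    rw [this]
    exact tendsto_const_nhds
  -- T (A x) = A x
  have h2 : T (A x) = A x := by
    refine ext_inner_right ℂ fun y => ?_
    have hshift : Tendsto (fun n : ℕ => (⟪(T ^ (n + 1)) x, y⟫ : ℂ)) atTop
        (𝓝 ⟪A x, y⟫) := (hA x y).comp (tendsto_add_atTop_nat 1)
    have heq : (fun n : ℕ => (⟪(T ^ (n + 1)) x, y⟫ : ℂ)) =
        fun n : ℕ => (⟪(T ^ n) x, ContinuousLinearMap.adjoint T y⟫ : ℂ) := by
      funext n
      rw [ContinuousLinearMap.adjoint_inner_right, pow_succ',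
        ContinuousLinearMap.mul_apply]
    rw [heq] at hshift
    have := tendsto_nhds_unique hshift (hA x (ContinuousLinearMap.adjoint T y))
    rw [ContinuousLinearMap.adjoint_inner_right] at this
    exact this.symm
  -- hence A x ∈ M ∩ Mᗮ = 0
  have h3 : (⟪A x, A x⟫ : ℂ) = 0 := by
    rw [inner_eq_zero_symm]
    exact (Submodule.mem_orthogonal _ _).1 h1 (A x) ((memKer_iff T (A x)).2 h2)
  exact inner_self_eq_zero.1 h3

/-- If the weak limit operator `A` exists, it is the identity on `M`. -/
lemma limit_id_on_M (T : H →L[ℂ] H) (A : H →L[ℂ] H)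
    (hA : ∀ x y : H,
      Tendsto (fun n : ℕ => (inner ℂ ((T ^ n) x) y : ℂ)) atTop (𝓝 (inner ℂ (A x) y)))
    {x : H} (hx : x ∈ LinearMap.ker ((1 - T : H →L[ℂ] H) : H →ₗ[ℂ] H)) : A x = x := by
  refine ext_inner_right ℂ fun y => ?_
  have h1 := hA x y
  have heq : (fun n : ℕ => (⟪(T ^ n) x, y⟫ : ℂ)) = fun _ => (⟪x, y⟫ : ℂ) := by
    funext n
    rw [pow_fix T ((memKer_iff T x).1 hx) n]
  rw [heq] at h1
  exact tendsto_nhds_unique h1 tendsto_const_nhds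

/-- If the weak limit operator `A` exists, it equals the orthogonal projection. -/
lemma limit_eq_proj (T : H →L[ℂ] H)
    (hred2 : ∀ x ∈ LinearMap.ker ((1 - T : H →L[ℂ] H) : H →ₗ[ℂ] H),
      ContinuousLinearMap.adjoint T x ∈ LinearMap.ker ((1 - T : H →L[ℂ] H) : H →ₗ[ℂ] H))
    (A : H →L[ℂ] H)
    (hA : ∀ x y : H,
      Tendsto (fun n : ℕ => (inner ℂ ((T ^ n) x) y : ℂ)) atTop (𝓝 (inner ℂ (A x) y))) :
    A = (LinearMap.ker ((1 - T : H →L[ℂ] H) : H →ₗ[ℂ] H)).subtypeL ∘L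
      Submodule.orthogonalProjectionOnto (LinearMap.ker ((1 - T : H →L[ℂ] H) : H →ₗ[ℂ] H)) := by
  ext x
  set M := LinearMap.ker ((1 - T : H →L[ℂ] H) : H →ₗ[ℂ] H)
  have hdecomp : x = (Submodule.orthogonalProjectionOnto M x : H) + (x - Submodule.orthogonalProjectionOnto M x) := by
    abel
  have h1 : A ((Submodule.orthogonalProjectionOnto M x : H)) = (Submodule.orthogonalProjectionOnto M x : H) :=
    limit_id_on_M T A hA (Submodule.orthogonalProjectionOnto M x).2
  have h2 : A (x - Submodule.orthogonalProjectionOnto M x) = 0 :=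
    limit_zero_on_perp T hred2 A hA (Submodule.sub_starProjection_mem_orthogonal (K := M) x)
  calc A x = A ((Submodule.orthogonalProjectionOnto M x : H)) + A (x - Submodule.orthogonalProjectionOnto M x) := by
        rw [← map_add]; exact congrArg A hdecomp
    _ = (Submodule.orthogonalProjectionOnto M x : H) := by rw [h1, h2, add_zero]

end Aux

/-- If `ker (I - T)` reduces `T`, then `{T^n}` is weakly convergent iff
`⟨T^n x, y⟩ → 0` for all `x ∈ ker (I - T)ᗮ` and `y ∈ H`; and in that case the weak
limit is the orthogonal projection of `H` onto `ker (I - T)` and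
`ker (I - T) = ker (I - T*)`. -/
theorem stmt10 {H : Type*} [NormedAddCommGroup H] [InnerProductSpace ℂ H] [CompleteSpace H]
    (T : H →L[ℂ] H)
    (hred : (∀ x ∈ LinearMap.ker ((1 - T : H →L[ℂ] H) : H →ₗ[ℂ] H), T x ∈ LinearMap.ker ((1 - T : H →L[ℂ] H) : H →ₗ[ℂ] H)) ∧
      (∀ x ∈ LinearMap.ker ((1 - T : H →L[ℂ] H) : H →ₗ[ℂ] H),
        ContinuousLinearMap.adjoint T x ∈ LinearMap.ker ((1 - T : H →L[ℂ] H) : H →ₗ[ℂ] H))) :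
    ((∃ A : H →L[ℂ] H, ∀ x y : H,
        Tendsto (fun n : ℕ => (inner ℂ ((T ^ n) x) y : ℂ)) atTop (𝓝 (inner ℂ (A x) y)))
      ↔ (∀ x ∈ (LinearMap.ker ((1 - T : H →L[ℂ] H) : H →ₗ[ℂ] H))ᗮ, ∀ y : H,
          Tendsto (fun n : ℕ => (inner ℂ ((T ^ n) x) y : ℂ)) atTop (𝓝 (0 : ℂ)))) ∧
    (∀ P : H →L[ℂ] H,
      (∀ x y : H,
        Tendsto (fun n : ℕ => (inner ℂ ((T ^ n) x) y : ℂ)) atTop (𝓝 (inner ℂ (P x) y))) →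
      (P ∘L P = P ∧ ContinuousLinearMap.adjoint P = P ∧
        LinearMap.range (P : H →ₗ[ℂ] H) = LinearMap.ker ((1 - T : H →L[ℂ] H) : H →ₗ[ℂ] H) ∧
        LinearMap.ker ((1 - T : H →L[ℂ] H) : H →ₗ[ℂ] H) = LinearMap.ker ((1 - ContinuousLinearMap.adjoint T : H →L[ℂ] H) : H →ₗ[ℂ] H))) := by
  set M := LinearMap.ker ((1 - T : H →L[ℂ] H) : H →ₗ[ℂ] H) with hMdef
  set Q : H →L[ℂ] H := M.subtypeL ∘L Submodule.orthogonalProjectionOnto M with hQdef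
  have hQmem : ∀ x : H, Q x ∈ M := fun x => (Submodule.orthogonalProjectionOnto M x).2
  have hQfix : ∀ x ∈ M, Q x = x := fun x hx => by
    simp only [hQdef, ContinuousLinearMap.comp_apply, Submodule.subtypeL_apply]
    exact (Submodule.starProjection_eq_self_iff (K := M)).2 hx
  constructor
  · constructor
    · rintro ⟨A, hA⟩ x hx y
      have h0 : A x = 0 := limit_zero_on_perp T hred.2 A hA hx
      have := hA x y
      rwa [h0, inner_zero_left] at this
    · intro h
      refine ⟨Q, fun x y => ?_⟩
      have hq : x - Q x ∈ Mᗮ := Submodule.sub_starProjection_mem_orthogonal (K := M) x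
      have heq : (fun n : ℕ => (inner ℂ ((T ^ n) x) y : ℂ)) =
          fun n : ℕ => (inner ℂ (Q x) y : ℂ) + (inner ℂ ((T ^ n) (x - Q x)) y : ℂ) := by
        funext n
        have : (T ^ n) x = Q x + (T ^ n) (x - Q x) := by
          have hfix : (T ^ n) (Q x) = Q x :=
            pow_fix T ((memKer_iff T (Q x)).1 (hQmem x)) n
          calc (T ^ n) x = (T ^ n) (Q x + (x - Q x)) := congrArg _ (by abel)
            _ = (T ^ n) (Q x) + (T ^ n) (x - Q x) := map_add _ _ _
            _ = Q x + (T ^ n) (x - Q x) := by rw [hfix]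
        rw [this, inner_add_left]
      rw [heq]
      have hc : Tendsto (fun _ : ℕ => (inner ℂ (Q x) y : ℂ)) atTop (𝓝 (inner ℂ (Q x) y)) :=
        tendsto_const_nhds
      have := hc.add (h (x - Q x) hq y)
      simpa using this
  · intro P hP
    have hPQ : P = Q := limit_eq_proj T hred.2 P hP
    subst hPQ
    refine ⟨?_, ?_, ?_, ?_⟩
    · ext x
      exact hQfix (Q x) (hQmem x)
    · exact (isSelfAdjoint_starProjection M).adjoint_eq
    · apply le_antisymm
      · rintro z ⟨x, rfl⟩
        exact hQmem x
      · intro z hz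
        exact ⟨z, hQfix z hz⟩
    · apply le_antisymm
      · intro x hx
        have hTx : T x = x := (memKer_iff T x).1 hx
        have hT'x : ContinuousLinearMap.adjoint T x ∈ M := hred.2 x hx
        have hdiff : ContinuousLinearMap.adjoint T x - x ∈ M := M.sub_mem hT'x hx
        have hperp : ∀ u ∈ M, (inner ℂ u (ContinuousLinearMap.adjoint T x - x) : ℂ) = 0 := by
          intro u hu
          have hTu : T u = u := (memKer_iff T u).1 hu
          rw [inner_sub_right, ContinuousLinearMap.adjoint_inner_right, hTu, sub_self]
        have : ContinuousLinearMap.adjoint T x - x = 0 := by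
          have := hperp _ hdiff
          rw [inner_eq_zero_symm] at this
          exact inner_self_eq_zero.1 this
        rw [memKer_iff]
        exact sub_eq_zero.1 this
      · intro x hx
        have hT'x : ContinuousLinearMap.adjoint T x = x :=
          (memKer_iff (ContinuousLinearMap.adjoint T) x).1 hx
        have hconst : ∀ y : H, ∀ n : ℕ, (inner ℂ ((T ^ n) y) x : ℂ) = inner ℂ y x := by
          intro y n
          induction n with
          | zero => simp
          | succ n ih =>
            rw [pow_succ', ContinuousLinearMap.mul_apply,
              ← ContinuousLinearMap.adjoint_inner_right, hT'x]
            exact ih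
        have hQx : Q x = x := by
          refine ext_inner_left ℂ fun y => ?_
          have h1 : Tendsto (fun n : ℕ => (inner ℂ ((T ^ n) y) x : ℂ)) atTop
              (𝓝 (inner ℂ (Q y) x)) := hP y x
          have h2 : (fun n : ℕ => (inner ℂ ((T ^ n) y) x : ℂ)) = fun _ => (inner ℂ y x : ℂ) := by
            funext n; exact hconst y n
          rw [h2] at h1
          have h3 : (inner ℂ (Q y) x : ℂ) = inner ℂ y x := tendsto_nhds_unique h1 tendsto_const_nhds
          rw [← h3, ← ContinuousLinearMap.adjoint_inner_right,
            (show ContinuousLinearMap.adjoint Q = Q from (isSelfAdjoint_starProjection M).adjoint_eq)]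
        rw [← hQx]
        exact hQmem x
end

section
/- Let H be a complex Hilbert space and let T ∈ B(H) be a contraction, i.e., ‖T‖ ≤ 1. Then ker(I − T) = ker(I − T*) (so ker(I − T) reduces T), and the power sequence {T^n} is weakly convergent if and only if ⟨T^n x, y⟩ → 0 as n → ∞ for every x ∈ ker(I − T)^⊥ and every y ∈ H; if this is the case, then the weak limit of {T^n} is the orthogonal projection of H onto ker(I − T). -/
open Filter Topology

lemma fix_adjoint_fix {H : Type*} [NormedAddCommGroup H] [InnerProductSpace ℂ H]
    [CompleteSpace H] (T : H →L[ℂ] H) (hT : ‖T‖ ≤ 1) {x : H} (hx : T x = x) :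
    ContinuousLinearMap.adjoint T x = x := by
  set S := ContinuousLinearMap.adjoint T with hS
  have hnorm : ‖S x‖ ≤ ‖x‖ := by
    calc ‖S x‖ ≤ ‖S‖ * ‖x‖ := S.le_opNorm x
      _ ≤ ‖x‖ := by
          have h1 : ‖S‖ = ‖T‖ := ContinuousLinearMap.adjoint.norm_map T
          nlinarith [norm_nonneg x]
  have hre : RCLike.re (inner ℂ (S x) x : ℂ) = ‖x‖ ^ 2 := by
    rw [hS, ContinuousLinearMap.adjoint_inner_left, hx]
    simp [inner_self_eq_norm_sq]
    rw [← Complex.ofReal_pow, Complex.ofReal_re]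
  have h0 : ‖S x - x‖ ^ 2 ≤ 0 := by
    rw [@norm_sub_sq ℂ, hre]
    nlinarith [norm_nonneg (S x), norm_nonneg x]
  have : S x - x = 0 := by
    have := norm_nonneg (S x - x)
    have hn : ‖S x - x‖ = 0 := by nlinarith
    simpa using hn
  exact sub_eq_zero.mp this

/-- Let `T` be a contraction, `‖T‖ ≤ 1`. Then `ker (I - T) = ker (I - T*)` (so
`ker (I - T)` reduces `T`), and `{T^n}` is weakly convergent iff `⟨T^n x, y⟩ → 0` for
all `x ∈ ker (I - T)ᗮ` and `y ∈ H`; in that case the weak limit is the orthogonal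
projection of `H` onto `ker (I - T)`. -/
theorem stmt12 {H : Type*} [NormedAddCommGroup H] [InnerProductSpace ℂ H] [CompleteSpace H]
    (T : H →L[ℂ] H) (hT : ‖T‖ ≤ 1) :
    LinearMap.ker ((1 - T : H →L[ℂ] H) : H →ₗ[ℂ] H) = LinearMap.ker ((1 - ContinuousLinearMap.adjoint T : H →L[ℂ] H) : H →ₗ[ℂ] H) ∧
    ((∀ x ∈ LinearMap.ker ((1 - T : H →L[ℂ] H) : H →ₗ[ℂ] H), T x ∈ LinearMap.ker ((1 - T : H →L[ℂ] H) : H →ₗ[ℂ] H)) ∧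
      (∀ x ∈ LinearMap.ker ((1 - T : H →L[ℂ] H) : H →ₗ[ℂ] H),
        ContinuousLinearMap.adjoint T x ∈ LinearMap.ker ((1 - T : H →L[ℂ] H) : H →ₗ[ℂ] H))) ∧
    ((∃ A : H →L[ℂ] H, ∀ x y : H,
        Tendsto (fun n : ℕ => (inner ℂ ((T ^ n) x) y : ℂ)) atTop (𝓝 (inner ℂ (A x) y)))
      ↔ (∀ x ∈ (LinearMap.ker ((1 - T : H →L[ℂ] H) : H →ₗ[ℂ] H))ᗮ, ∀ y : H,
          Tendsto (fun n : ℕ => (inner ℂ ((T ^ n) x) y : ℂ)) atTop (𝓝 (0 : ℂ)))) ∧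
    (∀ P : H →L[ℂ] H,
      (∀ x y : H,
        Tendsto (fun n : ℕ => (inner ℂ ((T ^ n) x) y : ℂ)) atTop (𝓝 (inner ℂ (P x) y))) →
      (P ∘L P = P ∧ ContinuousLinearMap.adjoint P = P ∧
        LinearMap.range (P : H →ₗ[ℂ] H) = LinearMap.ker ((1 - T : H →L[ℂ] H) : H →ₗ[ℂ] H))) := by
  set S := ContinuousLinearMap.adjoint T with hSdef
  set K := LinearMap.ker ((1 - T : H →L[ℂ] H) : H →ₗ[ℂ] H) with hKdef
  have hSnorm : ‖S‖ ≤ 1 := by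
    rw [hSdef, ContinuousLinearMap.adjoint.norm_map T]; exact hT
  have hSS : ContinuousLinearMap.adjoint S = T := by
    rw [hSdef, ContinuousLinearMap.adjoint_adjoint]
  have mem_iff : ∀ x : H, x ∈ K ↔ T x = x := by
    intro x
    rw [hKdef, LinearMap.mem_ker]
    simp only [ContinuousLinearMap.coe_coe, ContinuousLinearMap.sub_apply, ContinuousLinearMap.one_apply, sub_eq_zero]
    exact eq_comm
  have memS_iff : ∀ x : H, x ∈ LinearMap.ker ((1 - S : H →L[ℂ] H) : H →ₗ[ℂ] H) ↔ S x = x := by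
    intro x
    rw [LinearMap.mem_ker]
    simp only [ContinuousLinearMap.coe_coe, ContinuousLinearMap.sub_apply, ContinuousLinearMap.one_apply, sub_eq_zero]
    exact eq_comm
  -- Part 1
  have part1 : K = LinearMap.ker ((1 - S : H →L[ℂ] H) : H →ₗ[ℂ] H) := by
    ext x
    rw [mem_iff, memS_iff]
    constructor
    · exact fun h => fix_adjoint_fix T hT h
    · intro h
      have := fix_adjoint_fix S hSnorm h
      rwa [hSS] at this
  -- Part 2
  have part2a : ∀ x ∈ K, T x ∈ K := by
    intro x hx
    rw [mem_iff] at hx ⊢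
    rw [hx]; exact hx
  have part2b : ∀ x ∈ K, S x ∈ K := by
    intro x hx
    have hx' : S x = x := by
      rw [part1, memS_iff] at hx; exact hx
    rw [hx']; exact hx
  -- K is closed, orthogonal projection
  have hKclosed : IsClosed (K : Set H) := ContinuousLinearMap.isClosed_ker (1 - T)
  haveI : CompleteSpace K := hKclosed.completeSpace_coe
  set Q : H →L[ℂ] H := K.subtypeL ∘L K.orthogonalProjection with hQdef
  have hQmem : ∀ x : H, Q x ∈ K := fun x => (K.orthogonalProjection x).2
  have hQfix : ∀ x ∈ K, Q x = x := by
    intro x hx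
    exact Submodule.starProjection_eq_self_iff.mpr hx
  have hQorth : ∀ x : H, x - Q x ∈ Kᗮ := fun x => K.sub_starProjection_mem_orthogonal x
  have hpowfix : ∀ (n : ℕ) (x : H), x ∈ K → (T ^ n) x = x := by
    intro n
    induction n with
    | zero => intro x _; simp
    | succ n ih =>
        intro x hx
        rw [pow_succ', ContinuousLinearMap.mul_apply, ih x hx, (mem_iff x).mp hx]
  -- backward construction: if inner products tend to 0 on Kᗮ, then T^n → Q weakly
  have hQconv : (∀ x ∈ Kᗮ, ∀ y : H,
        Tendsto (fun n : ℕ => (inner ℂ ((T ^ n) x) y : ℂ)) atTop (𝓝 (0 : ℂ))) →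
      ∀ x y : H, Tendsto (fun n : ℕ => (inner ℂ ((T ^ n) x) y : ℂ)) atTop
        (𝓝 (inner ℂ (Q x) y)) := by
    intro h x y
    have key : ∀ n : ℕ, (inner ℂ ((T ^ n) x) y : ℂ)
        = inner ℂ (Q x) y + inner ℂ ((T ^ n) (x - Q x)) y := by
      intro n
      have hx : x = Q x + (x - Q x) := by abel
      conv_lhs => rw [hx]
      rw [map_add, inner_add_left, hpowfix n (Q x) (hQmem x)]
    have := (tendsto_const_nhds (x := (inner ℂ (Q x) y : ℂ)) (f := atTop)).add
      (h (x - Q x) (hQorth x) y)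
    simp only [add_zero] at this
    simpa only [← key] using this
  -- iff
  have hiff : (∃ A : H →L[ℂ] H, ∀ x y : H,
        Tendsto (fun n : ℕ => (inner ℂ ((T ^ n) x) y : ℂ)) atTop (𝓝 (inner ℂ (A x) y)))
      ↔ (∀ x ∈ Kᗮ, ∀ y : H,
          Tendsto (fun n : ℕ => (inner ℂ ((T ^ n) x) y : ℂ)) atTop (𝓝 (0 : ℂ))) := by
    constructor
    · rintro ⟨A, hA⟩ x hx y
      -- A ∘ T = A
      have hAT : ∀ z : H, A (T z) = A z := by
        intro z
        refine ext_inner_right ℂ fun w => ?_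
        have h1 : Tendsto (fun n : ℕ => (inner ℂ ((T ^ (n + 1)) z) w : ℂ)) atTop
            (𝓝 (inner ℂ (A z) w)) := (hA z w).comp (tendsto_add_atTop_nat 1)
        have h2 : ∀ n : ℕ, (inner ℂ ((T ^ (n + 1)) z) w : ℂ) = inner ℂ ((T ^ n) (T z)) w := by
          intro n; rw [pow_succ, ContinuousLinearMap.mul_apply]
        have h3 : Tendsto (fun n : ℕ => (inner ℂ ((T ^ n) (T z)) w : ℂ)) atTop
            (𝓝 (inner ℂ (A z) w)) := by simpa only [h2] using h1
        exact tendsto_nhds_unique (hA (T z) w) h3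
      -- range (1 - T) ≤ ker A
      have hrange : LinearMap.range ((1 - T : H →L[ℂ] H) : H →ₗ[ℂ] H) ≤ LinearMap.ker (A : H →ₗ[ℂ] H) := by
        rintro _ ⟨z, rfl⟩
        rw [LinearMap.mem_ker]
        simp only [ContinuousLinearMap.coe_coe, ContinuousLinearMap.sub_apply, ContinuousLinearMap.one_apply, map_sub,
          hAT z, sub_self]
      -- K = ker (1 - S) = (range (1 - T))ᗮ
      have hKorth : LinearMap.ker ((1 - S : H →L[ℂ] H) : H →ₗ[ℂ] H) = (LinearMap.range ((1 - T : H →L[ℂ] H) : H →ₗ[ℂ] H))ᗮ := by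
        ext v
        rw [memS_iff, Submodule.mem_orthogonal]
        constructor
        · rintro hv _ ⟨z, rfl⟩
          simp only [ContinuousLinearMap.coe_coe, ContinuousLinearMap.sub_apply, ContinuousLinearMap.one_apply,
            inner_sub_left]
          rw [← ContinuousLinearMap.adjoint_inner_right, ← hSdef, hv, sub_self]
        · intro hv
          have h := fun z : H => hv ((1 - T) z) ⟨z, rfl⟩
          have h2 : ∀ z : H, (inner ℂ z (v - S v) : ℂ) = 0 := by
            intro z
            have := h z
            simp only [ContinuousLinearMap.coe_coe, ContinuousLinearMap.sub_apply, ContinuousLinearMap.one_apply,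
              inner_sub_left] at this
            rw [← ContinuousLinearMap.adjoint_inner_right, ← hSdef] at this
            rwa [inner_sub_right]
          have : v - S v = 0 := by
            have := h2 (v - S v)
            rwa [inner_self_eq_zero] at this
          exact (sub_eq_zero.mp this).symm
      have hclos : Kᗮ ≤ LinearMap.ker (A : H →ₗ[ℂ] H) := by
        rw [part1, hKorth, Submodule.orthogonal_orthogonal_eq_closure]
        exact Submodule.topologicalClosure_minimal _ hrange (ContinuousLinearMap.isClosed_ker A)
      have hAx : A x = 0 := hclos hx
      have := hA x y
      rwa [hAx, inner_zero_left] at this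
    · intro h
      exact ⟨Q, hQconv h⟩
  -- part 4
  have part4 : ∀ P : H →L[ℂ] H,
      (∀ x y : H,
        Tendsto (fun n : ℕ => (inner ℂ ((T ^ n) x) y : ℂ)) atTop (𝓝 (inner ℂ (P x) y))) →
      (P ∘L P = P ∧ ContinuousLinearMap.adjoint P = P ∧
        LinearMap.range (P : H →ₗ[ℂ] H) = K) := by
    intro P hP
    have h0 := hiff.mp ⟨P, hP⟩
    have hQ := hQconv h0
    have hPQ : P = Q := by
      ext x
      exact ext_inner_right ℂ fun y => tendsto_nhds_unique (hP x y) (hQ x y)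
    subst hPQ
    refine ⟨?_, ?_, ?_⟩
    · ext x
      exact hQfix (Q x) (hQmem x)
    · exact (isSelfAdjoint_starProjection K).adjoint_eq
    · apply le_antisymm
      · rintro _ ⟨z, rfl⟩
        exact hQmem z
      · intro v hv
        exact ⟨v, hQfix v hv⟩
  exact ⟨part1, ⟨part2a, part2b⟩, hiff, part4⟩
end

section
/- Let H be a complex Hilbert space and suppose T, P ∈ B(H) are such that the power sequence {T^n} converges weakly to P and liminf_{n→∞} ‖T^n‖ ≤ 1. Then P is the orthogonal projection of H onto ker(I − T), the subspace ker(I − T) reduces T, and ker(I − T) = ker(I − T*). -/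
open Filter Topology

section Aux

open ContinuousLinearMap RCLike
open scoped InnerProductSpace

variable {H : Type*} [NormedAddCommGroup H] [InnerProductSpace ℂ H]

lemma stmt15_orth_of_norm_le {u v : H} (h : ∀ t : ℂ, ‖u‖ ≤ ‖u + t • v‖) :
    ⟪u, v⟫_ℂ = 0 := by
  set c : ℂ := ⟪u, v⟫_ℂ with hc
  have key : ∀ t : ℂ, 0 ≤ 2 * (t * c).re + ‖t‖ ^ 2 * ‖v‖ ^ 2 := by
    intro t
    have h1 : ‖u‖ ^ 2 ≤ ‖u + t • v‖ ^ 2 := by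
      have := h t; nlinarith [norm_nonneg u]
    have h2 : ‖u + t • v‖ ^ 2 = ‖u‖ ^ 2 + 2 * re ⟪u, t • v⟫_ℂ + ‖t • v‖ ^ 2 :=
      norm_add_sq (𝕜 := ℂ) u (t • v)
    rw [inner_smul_right] at h2
    simp only [RCLike.re_to_complex] at h2
    rw [← hc] at h2
    have h3 : ‖t • v‖ ^ 2 = ‖t‖ ^ 2 * ‖v‖ ^ 2 := by rw [norm_smul]; ring
    rw [h3] at h2
    nlinarith [h1, h2]
  by_cases hv : v = 0
  · simp [hc, hv]
  · have hv2 : 0 < ‖v‖ ^ 2 := by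
      have : 0 < ‖v‖ := norm_pos_iff.mpr hv
      positivity
    have hkey := key ((-(‖v‖ ^ 2)⁻¹ : ℝ) * (starRingEnd ℂ) c)
    have hcc : ((starRingEnd ℂ) c * c).re = ‖c‖ ^ 2 := by
      rw [mul_comm, Complex.mul_conj]
      simp [Complex.normSq_eq_norm_sq, ← Complex.ofReal_pow]
    have hnt : ‖((-(‖v‖ ^ 2)⁻¹ : ℝ) : ℂ) * (starRingEnd ℂ) c‖ ^ 2
        = (‖v‖ ^ 2)⁻¹ ^ 2 * ‖c‖ ^ 2 := by
      rw [norm_mul]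
      simp [norm_inv]
      ring
    have hre : ((((-(‖v‖ ^ 2)⁻¹ : ℝ) : ℂ) * (starRingEnd ℂ) c) * c).re
        = -(‖v‖ ^ 2)⁻¹ * ‖c‖ ^ 2 := by
      rw [mul_assoc, Complex.re_ofReal_mul, hcc]
    rw [hnt, hre] at hkey
    have hsimp : (‖v‖ ^ 2)⁻¹ ^ 2 * ‖c‖ ^ 2 * ‖v‖ ^ 2 = (‖v‖ ^ 2)⁻¹ * ‖c‖ ^ 2 := by
      field_simp
    rw [hsimp] at hkey
    have hx : (‖v‖ ^ 2)⁻¹ * ‖c‖ ^ 2 ≤ 0 := by linarith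
    have hx2 : 0 ≤ (‖v‖ ^ 2)⁻¹ * ‖c‖ ^ 2 := by positivity
    have hc0 : ‖c‖ ^ 2 = 0 := by
      have h0 : (‖v‖ ^ 2)⁻¹ * ‖c‖ ^ 2 = 0 := le_antisymm hx hx2
      have := inv_pos.mpr hv2
      nlinarith [this]
    have hcn : ‖c‖ = 0 := by nlinarith [norm_nonneg c]
    exact norm_eq_zero.mp hcn

lemma stmt15_pow_fixed (A : H →L[ℂ] H) (x : H) (h : A x = x) (n : ℕ) :
    (A ^ n) x = x := by
  induction n with
  | zero => simp
  | succ n ih => rw [pow_succ, ContinuousLinearMap.mul_apply, h, ih]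

lemma stmt15_mem_ker (A : H →L[ℂ] H) (x : H) :
    x ∈ LinearMap.ker ((1 - A : H →L[ℂ] H) : H →ₗ[ℂ] H) ↔ A x = x := by
  simp [LinearMap.mem_ker, ContinuousLinearMap.sub_apply, sub_eq_zero]; exact eq_comm

end Aux

/-- If `{T^n}` converges weakly to `P` and `liminf ‖T^n‖ ≤ 1`, then `P` is the
orthogonal projection of `H` onto `ker (I - T)`, `ker (I - T)` reduces `T`, and
`ker (I - T) = ker (I - T*)`. -/
theorem stmt15 {H : Type*} [NormedAddCommGroup H] [InnerProductSpace ℂ H] [CompleteSpace H]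
    (T P : H →L[ℂ] H)
    (hconv : ∀ x y : H,
      Tendsto (fun n : ℕ => (inner ℂ ((T ^ n) x) y : ℂ)) atTop (𝓝 (inner ℂ (P x) y)))
    (hliminf : Filter.liminf (fun n : ℕ => ‖T ^ n‖) atTop ≤ 1) :
    (P ∘L P = P ∧ ContinuousLinearMap.adjoint P = P ∧
      LinearMap.range (P : H →ₗ[ℂ] H) = LinearMap.ker ((1 - T : H →L[ℂ] H) : H →ₗ[ℂ] H)) ∧
    ((∀ x ∈ LinearMap.ker ((1 - T : H →L[ℂ] H) : H →ₗ[ℂ] H), T x ∈ LinearMap.ker ((1 - T : H →L[ℂ] H) : H →ₗ[ℂ] H)) ∧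
      (∀ x ∈ LinearMap.ker ((1 - T : H →L[ℂ] H) : H →ₗ[ℂ] H),
        ContinuousLinearMap.adjoint T x ∈ LinearMap.ker ((1 - T : H →L[ℂ] H) : H →ₗ[ℂ] H))) ∧
    LinearMap.ker ((1 - T : H →L[ℂ] H) : H →ₗ[ℂ] H) = LinearMap.ker ((1 - ContinuousLinearMap.adjoint T : H →L[ℂ] H) : H →ₗ[ℂ] H) := by
  classical
  -- Step 1: fixed points of T are fixed by P
  have hfix : ∀ x : H, T x = x → P x = x := by
    intro x hx
    apply ext_inner_right ℂ
    intro y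
    have h1 := hconv x y
    simp only [stmt15_pow_fixed T x hx] at h1
    exact tendsto_nhds_unique h1 tendsto_const_nhds
  -- Step 2: T ∘ P = P
  have hTP : ∀ x : H, T (P x) = P x := by
    intro x
    apply ext_inner_right ℂ
    intro y
    have ha := hconv x (ContinuousLinearMap.adjoint T y)
    have hb : Tendsto (fun n : ℕ => (inner ℂ ((T ^ (n + 1)) x) y : ℂ)) atTop
        (𝓝 (inner ℂ (P x) y)) := (hconv x y).comp (tendsto_add_atTop_nat 1)
    have heq : ∀ n : ℕ, (inner ℂ ((T ^ (n + 1)) x) y : ℂ)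
        = inner ℂ ((T ^ n) x) (ContinuousLinearMap.adjoint T y) := by
      intro n
      rw [pow_succ', ContinuousLinearMap.mul_apply,
        ContinuousLinearMap.adjoint_inner_right]
    simp only [heq] at hb
    have := tendsto_nhds_unique hb ha
    rw [ContinuousLinearMap.adjoint_inner_right] at this
    exact this.symm
  -- Step 3: P ∘ T = P
  have hPT : ∀ x : H, P (T x) = P x := by
    intro x
    apply ext_inner_right ℂ
    intro y
    have ha := hconv (T x) y
    have hb : Tendsto (fun n : ℕ => (inner ℂ ((T ^ (n + 1)) x) y : ℂ)) atTop
        (𝓝 (inner ℂ (P x) y)) := (hconv x y).comp (tendsto_add_atTop_nat 1)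
    have heq : ∀ n : ℕ, (inner ℂ ((T ^ (n + 1)) x) y : ℂ)
        = inner ℂ ((T ^ n) (T x)) y := by
      intro n
      rw [pow_succ, ContinuousLinearMap.mul_apply]
    simp only [heq] at hb
    exact tendsto_nhds_unique ha hb
  -- Uniform bound on ‖T ^ n‖ via Banach–Steinhaus
  have hbound : ∃ C : ℝ, ∀ n : ℕ, ‖T ^ n‖ ≤ C := by
    apply banach_steinhaus
    intro x
    have hx : ∃ C, ∀ n : ℕ, ‖innerSL ℂ ((T ^ n) x)‖ ≤ C := by
      apply banach_steinhaus
      intro y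
      obtain ⟨C, hC⟩ := ((hconv x y).norm).bddAbove_range
      exact ⟨C, fun n => by simpa [innerSL_apply_apply] using hC ⟨n, rfl⟩⟩
    obtain ⟨C, hC⟩ := hx
    exact ⟨C, fun n => by simpa [innerSL_apply_norm] using hC n⟩
  obtain ⟨C, hC⟩ := hbound
  -- Step 4: P is a contraction
  have hPle : ∀ x : H, ‖P x‖ ≤ ‖x‖ := by
    have hbd : ∀ x y : H, ‖(inner ℂ (P x) y : ℂ)‖ ≤ ‖x‖ * ‖y‖ := by
      intro x y
      have hb1 : ∀ b : ℝ, 1 < b → ‖(inner ℂ (P x) y : ℂ)‖ ≤ b * (‖x‖ * ‖y‖) := by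
        intro b hb
        have hfreq : ∃ᶠ n in atTop, ‖T ^ n‖ < b := by
          exact frequently_lt_of_liminf_lt
            (Filter.isCoboundedUnder_ge_of_le atTop hC)
            (lt_of_le_of_lt hliminf hb)
        by_contra hcon
        push_neg at hcon
        have htend : Tendsto (fun n : ℕ => ‖(inner ℂ ((T ^ n) x) y : ℂ)‖) atTop
            (𝓝 ‖(inner ℂ (P x) y : ℂ)‖) := (hconv x y).norm
        have hev : ∀ᶠ n in atTop, b * (‖x‖ * ‖y‖) < ‖(inner ℂ ((T ^ n) x) y : ℂ)‖ :=
          htend.eventually (eventually_gt_nhds hcon)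
        obtain ⟨n, hn1, hn2⟩ := (hfreq.and_eventually hev).exists
        have hle : ‖(inner ℂ ((T ^ n) x) y : ℂ)‖ ≤ ‖T ^ n‖ * ‖x‖ * ‖y‖ := by
          calc ‖(inner ℂ ((T ^ n) x) y : ℂ)‖ ≤ ‖(T ^ n) x‖ * ‖y‖ := norm_inner_le_norm _ _
            _ ≤ ‖T ^ n‖ * ‖x‖ * ‖y‖ := by
                have := (T ^ n).le_opNorm x
                have hy := norm_nonneg y
                nlinarith [norm_nonneg ((T ^ n) x)]
        have hxy : (0:ℝ) ≤ ‖x‖ * ‖y‖ := by positivity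
        nlinarith [norm_nonneg x, norm_nonneg y]
      have hb2 : Tendsto (fun n : ℕ => (1 + 1 / (n + 1 : ℝ)) * (‖x‖ * ‖y‖)) atTop
          (𝓝 (1 * (‖x‖ * ‖y‖))) := by
        apply Tendsto.mul_const
        simpa using (tendsto_const_nhds (x := (1:ℝ))).add
          tendsto_one_div_add_atTop_nhds_zero_nat
      rw [one_mul] at hb2
      apply ge_of_tendsto hb2
      filter_upwards with n
      apply hb1
      have : (0:ℝ) < 1 / (n + 1 : ℝ) := by positivity
      linarith
    intro x
    rcases eq_or_ne (P x) 0 with h0 | h0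
    · simp [h0]
    · have hb := hbd x (P x)
      have hn : ‖(inner ℂ (P x) (P x) : ℂ)‖ = ‖P x‖ ^ 2 := by
        rw [inner_self_eq_norm_sq_to_K, norm_pow, RCLike.norm_ofReal, sq_abs]
      rw [hn] at hb
      have hp : 0 < ‖P x‖ := norm_pos_iff.mpr h0
      nlinarith
  -- Step 5: idempotent
  have hPP : ∀ x : H, P (P x) = P x := fun x => hfix _ (hTP x)
  -- Orthogonality: range ⟂ kernel
  have hOrth : ∀ u v : H, P u = u → P v = 0 → (inner ℂ u v : ℂ) = 0 := by
    intro u v hu hv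
    apply stmt15_orth_of_norm_le
    intro t
    have : P (u + t • v) = u := by
      rw [map_add, map_smul, hu, hv, smul_zero, add_zero]
    calc ‖u‖ = ‖P (u + t • v)‖ := by rw [this]
      _ ≤ ‖u + t • v‖ := hPle _
  -- Step 6: P is self-adjoint
  have hadj : ContinuousLinearMap.adjoint P = P := by
    symm
    rw [ContinuousLinearMap.eq_adjoint_iff]
    intro x y
    have h1 : (inner ℂ (P x) (y - P y) : ℂ) = 0 := hOrth _ _ (hPP x) (by
      rw [map_sub, hPP, sub_self])
    have h2 : (inner ℂ (P y) (x - P x) : ℂ) = 0 := hOrth _ _ (hPP y) (by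
      rw [map_sub, hPP, sub_self])
    rw [inner_sub_right] at h1 h2
    have h1' : (inner ℂ (P x) y : ℂ) = inner ℂ (P x) (P y) := by
      rwa [sub_eq_zero] at h1
    have h2' : (inner ℂ (P y) x : ℂ) = inner ℂ (P y) (P x) := by
      rwa [sub_eq_zero] at h2
    rw [h1', ← inner_conj_symm x (P y), h2', inner_conj_symm]
  -- Step 7: T* ∘ P = P
  have hT'P : ∀ x : H, ContinuousLinearMap.adjoint T (P x) = P x := by
    have hc : P ∘L T = P := ContinuousLinearMap.ext fun x => hPT x
    have := congrArg ContinuousLinearMap.adjoint hc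
    rw [ContinuousLinearMap.adjoint_comp, hadj] at this
    intro x
    exact ContinuousLinearMap.ext_iff.mp this x
  -- Step 8: fixed points of T* are fixed by P (hence by T)
  have hfix' : ∀ x : H, ContinuousLinearMap.adjoint T x = x → P x = x := by
    intro x hx
    have hpow : ∀ n : ℕ, ContinuousLinearMap.adjoint (T ^ n) x = x := by
      intro n
      rw [← ContinuousLinearMap.star_eq_adjoint, star_pow]
      exact stmt15_pow_fixed _ x (by rw [ContinuousLinearMap.star_eq_adjoint]; exact hx) n
    have h1 : ∀ n : ℕ, (inner ℂ ((T ^ n) x) x : ℂ) = inner ℂ x x := by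
      intro n
      rw [← ContinuousLinearMap.adjoint_inner_right, hpow n]
    have h2 : (inner ℂ (P x) x : ℂ) = inner ℂ x x := by
      have := hconv x x
      simp only [h1] at this
      exact tendsto_nhds_unique this tendsto_const_nhds
    have h3 : (inner ℂ (P x) (x - P x) : ℂ) = 0 := hOrth _ _ (hPP x) (by
      rw [map_sub, hPP, sub_self])
    rw [inner_sub_right, sub_eq_zero] at h3
    -- ⟪Px, x⟫ = ⟪Px, Px⟫ = ⟪x, x⟫
    have h4 : (inner ℂ (x - P x) (x - P x) : ℂ) = 0 := by
      rw [inner_sub_left, inner_sub_right, inner_sub_right]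
      have h5 : (inner ℂ x (P x) : ℂ) = inner ℂ x x := by
        rw [← inner_conj_symm x (P x), h2, inner_conj_symm]
      rw [h5, h3.symm, h2]
      ring
    have h6 : x - P x = 0 := inner_self_eq_zero.mp h4
    have : x = P x := sub_eq_zero.mp h6
    exact this.symm
  -- fixed points of T* are fixed by T
  have hker' : ∀ x : H, ContinuousLinearMap.adjoint T x = x → T x = x := by
    intro x hx
    have hp := hfix' x hx
    calc T x = T (P x) := by rw [hp]
      _ = P x := hTP x
      _ = x := hp
  -- fixed points of T are fixed by T*
  have hker : ∀ x : H, T x = x → ContinuousLinearMap.adjoint T x = x := by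
    intro x hx
    have hp := hfix x hx
    calc ContinuousLinearMap.adjoint T x = ContinuousLinearMap.adjoint T (P x) := by rw [hp]
      _ = P x := hT'P x
      _ = x := hp
  refine ⟨⟨ContinuousLinearMap.ext fun x => hPP x, hadj, ?_⟩, ⟨?_, ?_⟩, ?_⟩
  · refine SetLike.ext fun x => ?_
    rw [stmt15_mem_ker]
    constructor
    · rintro ⟨y, rfl⟩
      exact hTP y
    · intro h
      exact ⟨x, hfix x h⟩
  · intro x hx
    rw [stmt15_mem_ker] at hx ⊢
    rw [hx]
    exact hx
  · intro x hx
    rw [stmt15_mem_ker] at hx ⊢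
    rw [hker x hx]
    exact hx
  · refine SetLike.ext fun x => ?_
    rw [stmt15_mem_ker, stmt15_mem_ker]
    exact ⟨hker x, hker' x⟩
end

section
/- Let H be a complex Hilbert space and suppose T, P ∈ B(H) are such that the power sequence {T^n} converges weakly to P and liminf_{n→∞} ‖T^n x‖ ≤ ‖x‖ for every x ∈ H. Then P is the orthogonal projection of H onto ker(I − T), the subspace ker(I − T) reduces T, and ker(I − T) = ker(I − T*). -/
open Filter Topology

/-- If `{T^n}` converges weakly to `P` and `liminf ‖T^n x‖ ≤ ‖x‖` for every `x`, then
`P` is the orthogonal projection of `H` onto `ker (I - T)`, `ker (I - T)` reduces `T`,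
and `ker (I - T) = ker (I - T*)`. -/
theorem stmt16 {H : Type*} [NormedAddCommGroup H] [InnerProductSpace ℂ H] [CompleteSpace H]
    (T P : H →L[ℂ] H)
    (hconv : ∀ x y : H,
      Tendsto (fun n : ℕ => (inner ℂ ((T ^ n) x) y : ℂ)) atTop (𝓝 (inner ℂ (P x) y)))
    (hliminf : ∀ x : H, Filter.liminf (fun n : ℕ => ‖(T ^ n) x‖) atTop ≤ ‖x‖) :
    (P ∘L P = P ∧ ContinuousLinearMap.adjoint P = P ∧
      LinearMap.range (P : H →ₗ[ℂ] H) = LinearMap.ker ((1 - T : H →L[ℂ] H) : H →ₗ[ℂ] H)) ∧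
    ((∀ x ∈ LinearMap.ker ((1 - T : H →L[ℂ] H) : H →ₗ[ℂ] H), T x ∈ LinearMap.ker ((1 - T : H →L[ℂ] H) : H →ₗ[ℂ] H)) ∧
      (∀ x ∈ LinearMap.ker ((1 - T : H →L[ℂ] H) : H →ₗ[ℂ] H),
        ContinuousLinearMap.adjoint T x ∈ LinearMap.ker ((1 - T : H →L[ℂ] H) : H →ₗ[ℂ] H))) ∧
    LinearMap.ker ((1 - T : H →L[ℂ] H) : H →ₗ[ℂ] H) = LinearMap.ker ((1 - ContinuousLinearMap.adjoint T : H →L[ℂ] H) : H →ₗ[ℂ] H) := by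
  -- shifted convergence
  have hshift : ∀ x y : H,
      Tendsto (fun n : ℕ => (inner ℂ ((T ^ (n + 1)) x) y : ℂ)) atTop (𝓝 (inner ℂ (P x) y)) :=
    fun x y => (hconv x y).comp (tendsto_add_atTop_nat 1)
  -- P (T x) = P x
  have hPT : ∀ x : H, P (T x) = P x := by
    intro x
    apply ext_inner_right ℂ
    intro y
    have h1 := hconv (T x) y
    have h2 : (fun n : ℕ => (inner ℂ ((T ^ n) (T x)) y : ℂ))
        = fun n : ℕ => (inner ℂ ((T ^ (n + 1)) x) y : ℂ) := by
      funext n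
      rw [pow_succ, ContinuousLinearMap.mul_apply]
    rw [h2] at h1
    exact tendsto_nhds_unique h1 (hshift x y)
  -- T (P x) = P x
  have hTP : ∀ x : H, T (P x) = P x := by
    intro x
    apply ext_inner_right ℂ
    intro y
    have h1 := hconv x (ContinuousLinearMap.adjoint T y)
    have h2 : (fun n : ℕ => (inner ℂ ((T ^ n) x) (ContinuousLinearMap.adjoint T y) : ℂ))
        = fun n : ℕ => (inner ℂ ((T ^ (n + 1)) x) y : ℂ) := by
      funext n
      rw [ContinuousLinearMap.adjoint_inner_right, pow_succ', ContinuousLinearMap.mul_apply]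
    rw [h2] at h1
    have h3 := tendsto_nhds_unique h1 (hshift x y)
    rw [ContinuousLinearMap.adjoint_inner_right] at h3
    exact h3
  -- P fixes fixed points of T
  have hfix : ∀ x : H, T x = x → P x = x := by
    intro x hx
    have hpow : ∀ n : ℕ, (T ^ n) x = x := by
      intro n
      induction n with
      | zero => simp
      | succ n ih => rw [pow_succ', ContinuousLinearMap.mul_apply, ih, hx]
    apply ext_inner_right ℂ
    intro y
    have h1 := hconv x y
    have h2 : (fun n : ℕ => (inner ℂ ((T ^ n) x) y : ℂ)) = fun _ : ℕ => (inner ℂ x y : ℂ) := by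
      funext n; rw [hpow n]
    rw [h2] at h1
    exact tendsto_nhds_unique h1 tendsto_const_nhds
  -- P is idempotent
  have hPP : ∀ x : H, P (P x) = P x := fun x => hfix (P x) (hTP x)
  -- boundedness of the orbits
  have hbdd : ∀ x : H, ∃ C : ℝ, ∀ n : ℕ, ‖(T ^ n) x‖ ≤ C := by
    intro x
    have hpt : ∀ y : H, ∃ C : ℝ, ∀ n : ℕ, ‖(innerSL ℂ ((T ^ n) x)) y‖ ≤ C := by
      intro y
      obtain ⟨C, hC⟩ := ((hconv x y).norm).bddAbove_range
      exact ⟨C, fun n => hC (Set.mem_range_self n)⟩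
    obtain ⟨C, hC⟩ := banach_steinhaus hpt
    refine ⟨C, fun n => ?_⟩
    have := hC n
    rwa [innerSL_apply_norm] at this
  -- norm bound for P
  have hnormle : ∀ x : H, ‖P x‖ ≤ ‖x‖ := by
    intro x
    rcases eq_or_lt_of_le (norm_nonneg (P x)) with hc | hc
    · rw [← hc]; exact norm_nonneg x
    set c : ℝ := ‖P x‖ with hcdef
    have key : c * c ≤ ‖x‖ * c := by
      by_contra hlt
      push_neg at hlt
      set b : ℝ := (‖x‖ * c + c * c) / 2 with hbdef
      have hb1 : ‖x‖ * c < b := by rw [hbdef]; linarith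
      have hb2 : b < c * c := by rw [hbdef]; linarith
      have htend : Tendsto (fun n : ℕ => ‖(inner ℂ ((T ^ n) x) (P x) : ℂ)‖) atTop
          (𝓝 ‖(inner ℂ (P x) (P x) : ℂ)‖) := (hconv x (P x)).norm
      have hself : ‖(inner ℂ (P x) (P x) : ℂ)‖ = c * c := by
        rw [@inner_self_eq_norm_sq_to_K ℂ, norm_pow, RCLike.norm_ofReal, abs_norm, sq, hcdef]
      rw [hself] at htend
      have hev : ∀ᶠ n : ℕ in atTop, b < ‖(inner ℂ ((T ^ n) x) (P x) : ℂ)‖ :=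
        htend.eventually (eventually_gt_nhds hb2)
      have hev2 : ∀ᶠ n : ℕ in atTop, b / c < ‖(T ^ n) x‖ := by
        filter_upwards [hev] with n hn
        have hle : ‖(inner ℂ ((T ^ n) x) (P x) : ℂ)‖ ≤ ‖(T ^ n) x‖ * c :=
          norm_inner_le_norm _ _
        rw [div_lt_iff₀ hc]
        linarith
      obtain ⟨C, hC⟩ := hbdd x
      have hcb : IsCoboundedUnder (· ≥ ·) atTop (fun n : ℕ => ‖(T ^ n) x‖) :=
        isCoboundedUnder_ge_of_le atTop hC
      have hlt2 : Filter.liminf (fun n : ℕ => ‖(T ^ n) x‖) atTop < b / c :=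
        lt_of_le_of_lt (hliminf x) (by rw [lt_div_iff₀ hc]; exact hb1)
      have hfreq := frequently_lt_of_liminf_lt hcb hlt2
      obtain ⟨n, hn1, hn2⟩ := (hfreq.and_eventually hev2).exists
      exact absurd hn2 (not_lt.mpr hn1.le)
    exact le_of_mul_le_mul_right key hc
  -- orthogonality of range and kernel of P
  have horth : ∀ u v : H, P u = u → P v = 0 → (inner ℂ u v : ℂ) = 0 := by
    intro u v hu hv
    by_contra hz
    set z : ℂ := inner ℂ u v with hzdef
    set s : ℝ := (‖v‖ ^ 2 + 1)⁻¹ with hsdef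
    have hden : (0:ℝ) < ‖v‖ ^ 2 + 1 := by positivity
    have hs : 0 < s := by positivity
    set t : ℂ := -(s : ℂ) * (starRingEnd ℂ) z with htdef
    set w : H := u + t • v with hwdef
    have hPw : P w = u := by
      rw [hwdef, map_add, map_smul, hu, hv, smul_zero, add_zero]
    have hle : ‖u‖ ≤ ‖w‖ := by
      have := hnormle w
      rwa [hPw] at this
    have hle2 : ‖u‖ ^ 2 ≤ ‖w‖ ^ 2 := pow_le_pow_left₀ (norm_nonneg u) hle 2
    have hexp : ‖w‖ ^ 2 = ‖u‖ ^ 2 + 2 * RCLike.re (inner ℂ u (t • v) : ℂ) + ‖t • v‖ ^ 2 :=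
      @norm_add_sq ℂ _ _ _ _ u (t • v)
    have hinner : (inner ℂ u (t • v) : ℂ) = -(s : ℂ) * ((‖z‖ : ℂ) ^ 2) := by
      rw [inner_smul_right, htdef, ← hzdef]
      rw [mul_assoc]
      congr 1
      rw [RCLike.conj_mul]
      norm_cast
    have hre : RCLike.re (inner ℂ u (t • v) : ℂ) = -(s * ‖z‖ ^ 2) := by
      rw [hinner]
      have : -(s : ℂ) * ((‖z‖ : ℂ) ^ 2) = ((-(s * ‖z‖ ^ 2) : ℝ) : ℂ) := by
        push_cast; ring
      rw [this]
      exact RCLike.ofReal_re _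
    have hnt : ‖t • v‖ ^ 2 = s ^ 2 * ‖z‖ ^ 2 * ‖v‖ ^ 2 := by
      rw [norm_smul, htdef, norm_mul, norm_neg, RCLike.norm_conj]
      rw [Complex.norm_real, Real.norm_eq_abs, abs_of_pos hs]
      ring
    have hznorm : 0 < ‖z‖ := norm_pos_iff.mpr hz
    have hsv : s * (‖v‖ ^ 2 + 1) = 1 := inv_mul_cancel₀ (ne_of_gt hden)
    rw [hexp, hre, hnt] at hle2
    nlinarith [mul_pos hs (mul_pos hznorm hznorm), sq_nonneg ‖v‖, mul_pos hs hden]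
  -- P is self-adjoint
  have hadj : ContinuousLinearMap.adjoint P = P := by
    have h := (ContinuousLinearMap.eq_adjoint_iff P P).mpr ?_
    · exact h.symm
    intro x y
    have h1 : (inner ℂ (P x) (y - P y) : ℂ) = 0 := by
      apply horth
      · exact hPP x
      · rw [map_sub, hPP y, sub_self]
    have h2 : (inner ℂ (P y) (x - P x) : ℂ) = 0 := by
      apply horth
      · exact hPP y
      · rw [map_sub, hPP x, sub_self]
    have h3 : (inner ℂ (x - P x) (P y) : ℂ) = 0 := by
      rw [← inner_conj_symm, h2, map_zero]
    rw [inner_sub_right] at h1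
    rw [inner_sub_left] at h3
    have h4 : (inner ℂ (P x) y : ℂ) = inner ℂ (P x) (P y) := by
      rw [sub_eq_zero] at h1; exact h1
    have h5 : (inner ℂ x (P y) : ℂ) = inner ℂ (P x) (P y) := by
      rw [sub_eq_zero] at h3; exact h3
    rw [h4, h5]
  -- T* fixes the range of P
  have hTstarP : ∀ z : H, ContinuousLinearMap.adjoint T (P z) = P z := by
    intro z
    apply ext_inner_right ℂ
    intro y
    rw [ContinuousLinearMap.adjoint_inner_left]
    calc (inner ℂ (P z) (T y) : ℂ) = inner ℂ z (P (T y)) := by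
          rw [← ContinuousLinearMap.adjoint_inner_right, hadj]
      _ = inner ℂ z (P y) := by rw [hPT]
      _ = inner ℂ (P z) y := by rw [← ContinuousLinearMap.adjoint_inner_right, hadj]
  -- membership in ker (1 - T) means being a fixed point
  have hker : ∀ x : H, x ∈ LinearMap.ker ((1 - T : H →L[ℂ] H) : H →ₗ[ℂ] H) ↔ T x = x := by
    intro x
    rw [LinearMap.mem_ker]
    constructor
    · intro h
      have : x - T x = 0 := by
        simpa [ContinuousLinearMap.sub_apply] using h
      rw [sub_eq_zero] at this
      exact this.symm
    · intro h
      simp [ContinuousLinearMap.sub_apply, h]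
  have hkerstar : ∀ x : H,
      x ∈ LinearMap.ker ((1 - ContinuousLinearMap.adjoint T : H →L[ℂ] H) : H →ₗ[ℂ] H) ↔
        ContinuousLinearMap.adjoint T x = x := by
    intro x
    rw [LinearMap.mem_ker]
    constructor
    · intro h
      have : x - ContinuousLinearMap.adjoint T x = 0 := by
        simpa [ContinuousLinearMap.sub_apply] using h
      rw [sub_eq_zero] at this
      exact this.symm
    · intro h
      simp [ContinuousLinearMap.sub_apply, h]
  -- fixed points of T* are fixed by P
  have hfixstar : ∀ y : H, ContinuousLinearMap.adjoint T y = y → P y = y := by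
    intro y hy
    have hconst : ∀ x : H, (inner ℂ (P x) y : ℂ) = inner ℂ x y := by
      intro x
      have hpow : ∀ n : ℕ, (inner ℂ ((T ^ n) x) y : ℂ) = inner ℂ x y := by
        intro n
        induction n with
        | zero => simp
        | succ n ih =>
          rw [pow_succ', ContinuousLinearMap.mul_apply,
            ← ContinuousLinearMap.adjoint_inner_right T, hy]
          exact ih
      have h1 := hconv x y
      have h2 : (fun n : ℕ => (inner ℂ ((T ^ n) x) y : ℂ)) = fun _ : ℕ => (inner ℂ x y : ℂ) := by
        funext n; exact hpow n
      rw [h2] at h1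
      exact tendsto_nhds_unique h1 tendsto_const_nhds
    apply ext_inner_left ℂ
    intro x
    calc (inner ℂ x (P y) : ℂ) = inner ℂ (P x) y := by
          rw [← ContinuousLinearMap.adjoint_inner_right, hadj]
      _ = inner ℂ x y := hconst x
  refine ⟨⟨?_, hadj, ?_⟩, ⟨?_, ?_⟩, ?_⟩
  · ext x
    exact hPP x
  · ext x
    rw [hker x, LinearMap.mem_range]
    constructor
    · rintro ⟨y, rfl⟩
      exact hTP y
    · intro h
      exact ⟨x, hfix x h⟩
  · intro x hx
    rw [hker] at hx ⊢
    rw [hx, hx]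
  · intro x hx
    rw [hker] at hx ⊢
    have hx' : ContinuousLinearMap.adjoint T x = x := by
      conv_lhs => rw [← hfix x hx]
      rw [hTstarP, hfix x hx]
    rw [hx', hx]
  · ext x
    rw [hker, hkerstar]
    constructor
    · intro h
      conv_lhs => rw [← hfix x h]
      rw [hTstarP, hfix x h]
    · intro h
      have hPx : P x = x := hfixstar x h
      conv_lhs => rw [← hPx]
      rw [hTP, hPx]
end

section
/- Let H be a complex Hilbert space and suppose T, P ∈ B(H) are such that the power sequence {T^n} converges weakly to P and T is a numerical contraction, i.e., |⟨T x, x⟩| ≤ ‖x‖² for every x ∈ H. Then P is the orthogonal projection of H onto ker(I − T), the subspace ker(I − T) reduces T, and ker(I − T) = ker(I − T*). -/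
open Filter Topology ContinuousLinearMap

lemma aux_pos_null {H : Type*} [NormedAddCommGroup H] [InnerProductSpace ℂ H]
    (S : H →L[ℂ] H)
    (hsa : ∀ a b : H, (inner ℂ (S a) b : ℂ) = inner ℂ a (S b))
    (hpos : ∀ y : H, 0 ≤ (inner ℂ (S y) y : ℂ).re)
    (x : H) (hx : (inner ℂ (S x) x : ℂ).re = 0) : S x = 0 := by
  set b : ℝ := ‖S x‖ ^ 2 with hbdef
  set c : ℝ := (inner ℂ (S (S x)) (S x) : ℂ).re with hcdef
  have hc0 : 0 ≤ c := hpos (S x)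
  have key : ∀ t : ℝ, 0 ≤ t ^ 2 * c + 2 * t * b := by
    intro t
    have h := hpos (x + (t : ℂ) • S x)
    have hS1 : (inner ℂ (S (S x)) x : ℂ) = inner ℂ (S x) (S x) := hsa (S x) x
    simp only [map_add, map_smul, inner_add_left, inner_add_right, inner_smul_left,
      inner_smul_right, hS1, inner_self_eq_norm_sq_to_K] at h
    simp only [Complex.add_re, Complex.mul_re, Complex.conj_re, Complex.conj_im,
      Complex.ofReal_re, Complex.ofReal_im, Complex.ofReal_pow, Complex.add_im,
      Complex.mul_im, hx] at h
    ring_nf at h ⊢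
    norm_cast at h
  by_contra hne
  have hb0 : 0 < b := by
    have h1 : S x ≠ 0 := hne
    have h2 : 0 < ‖S x‖ := norm_pos_iff.mpr h1
    positivity
  have hcp : (0:ℝ) < c + 1 := by linarith
  set d : ℝ := b / (c + 1) with hdd
  have hd0 : 0 < d := div_pos hb0 hcp
  have hd : d * (c + 1) = b := div_mul_cancel₀ b (ne_of_gt hcp)
  have h2 := key (-d)
  nlinarith [mul_pos hd0 hd0]

lemma aux_fix_adj {H : Type*} [NormedAddCommGroup H] [InnerProductSpace ℂ H]
    [CompleteSpace H] (T : H →L[ℂ] H)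
    (hnum : ∀ x : H, ‖(inner ℂ (T x) x : ℂ)‖ ≤ ‖x‖ ^ 2)
    (x : H) (hx : T x = x) : ContinuousLinearMap.adjoint T x = x := by
  set S : H →L[ℂ] H := (1 - T) + (1 - ContinuousLinearMap.adjoint T) with hSdef
  have hSapp : ∀ y : H, S y = (y - T y) + (y - ContinuousLinearMap.adjoint T y) := by
    intro y; simp [hSdef, sub_apply, add_apply, one_apply]
  have hsa : ∀ a b : H, (inner ℂ (S a) b : ℂ) = inner ℂ a (S b) := by
    intro a b
    rw [hSapp a, hSapp b]
    simp only [inner_add_left, inner_add_right, inner_sub_left, inner_sub_right,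
      adjoint_inner_left, adjoint_inner_right]
    ring
  have hconjre : ∀ y : H, (inner ℂ (ContinuousLinearMap.adjoint T y) y : ℂ).re
      = (inner ℂ (T y) y : ℂ).re := by
    intro y
    rw [adjoint_inner_left, ← inner_conj_symm, Complex.conj_re]
  have hpos : ∀ y : H, 0 ≤ (inner ℂ (S y) y : ℂ).re := by
    intro y
    have h1 : ((inner ℂ (T y) y : ℂ)).re ≤ ‖y‖ ^ 2 :=
      le_trans (Complex.re_le_norm _) (hnum y)
    rw [hSapp y]
    simp only [inner_add_left, inner_sub_left, Complex.add_re, Complex.sub_re, hconjre,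
      inner_self_eq_norm_sq_to_K]
    norm_cast
    simp only [Complex.coe_algebraMap, Complex.ofReal_re]
    linarith
  have hx0 : (inner ℂ (S x) x : ℂ).re = 0 := by
    rw [hSapp x, hx, sub_self, zero_add, inner_sub_left]
    rw [Complex.sub_re, hconjre x, hx]
    exact sub_self _
  have hS0 := aux_pos_null S hsa hpos x hx0
  rw [hSapp x, hx, sub_self, zero_add, sub_eq_zero] at hS0
  exact hS0.symm

/-- If `{T^n}` converges weakly to `P` and `T` is a numerical contraction
(`|⟨T x, x⟩| ≤ ‖x‖²` for all `x`), then `P` is the orthogonal projection of `H` onto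
`ker (I - T)`, `ker (I - T)` reduces `T`, and `ker (I - T) = ker (I - T*)`. -/
theorem stmt17 {H : Type*} [NormedAddCommGroup H] [InnerProductSpace ℂ H] [CompleteSpace H]
    (T P : H →L[ℂ] H)
    (hconv : ∀ x y : H,
      Tendsto (fun n : ℕ => (inner ℂ ((T ^ n) x) y : ℂ)) atTop (𝓝 (inner ℂ (P x) y)))
    (hnum : ∀ x : H, ‖(inner ℂ (T x) x : ℂ)‖ ≤ ‖x‖ ^ 2) :
    (P ∘L P = P ∧ ContinuousLinearMap.adjoint P = P ∧
      LinearMap.range (P : H →ₗ[ℂ] H) = LinearMap.ker ((1 - T : H →L[ℂ] H) : H →ₗ[ℂ] H)) ∧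
    ((∀ x ∈ LinearMap.ker ((1 - T : H →L[ℂ] H) : H →ₗ[ℂ] H), T x ∈ LinearMap.ker ((1 - T : H →L[ℂ] H) : H →ₗ[ℂ] H)) ∧
      (∀ x ∈ LinearMap.ker ((1 - T : H →L[ℂ] H) : H →ₗ[ℂ] H),
        ContinuousLinearMap.adjoint T x ∈ LinearMap.ker ((1 - T : H →L[ℂ] H) : H →ₗ[ℂ] H))) ∧
    LinearMap.ker ((1 - T : H →L[ℂ] H) : H →ₗ[ℂ] H) = LinearMap.ker ((1 - ContinuousLinearMap.adjoint T : H →L[ℂ] H) : H →ₗ[ℂ] H) := by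
  have hnum' : ∀ x : H, ‖(inner ℂ (ContinuousLinearMap.adjoint T x) x : ℂ)‖ ≤ ‖x‖ ^ 2 := by
    intro x
    rw [adjoint_inner_left, ← inner_conj_symm, RCLike.norm_conj]
    exact hnum x
  have hfixadj : ∀ x : H, T x = x → ContinuousLinearMap.adjoint T x = x :=
    fun x hx => aux_fix_adj T hnum x hx
  have hfixadj' : ∀ x : H, ContinuousLinearMap.adjoint T x = x → T x = x := by
    intro x hx
    have h := aux_fix_adj (ContinuousLinearMap.adjoint T) hnum' x hx
    rwa [adjoint_adjoint] at h
  have hTn_fix : ∀ (n : ℕ) (x : H), T x = x → (T ^ n) x = x := by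
    intro n x hx
    induction n with
    | zero => simp
    | succ n ih => rw [pow_succ, ContinuousLinearMap.mul_apply, hx, ih]
  -- P fixes fixed points of T
  have hPfix : ∀ x : H, T x = x → P x = x := by
    intro x hx
    apply ext_inner_right ℂ
    intro y
    have hc2 : Tendsto (fun n : ℕ => (inner ℂ ((T ^ n) x) y : ℂ)) atTop (𝓝 (inner ℂ x y)) := by
      have he : (fun n : ℕ => (inner ℂ ((T ^ n) x) y : ℂ)) = fun _ => (inner ℂ x y : ℂ) :=
        funext fun n => by rw [hTn_fix n x hx]
      rw [he]; exact tendsto_const_nhds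
    exact tendsto_nhds_unique (hconv x y) hc2
  -- T P = P
  have hTP : ∀ x : H, T (P x) = P x := by
    intro x
    apply ext_inner_right ℂ
    intro y
    have h1 : Tendsto (fun n : ℕ => (inner ℂ ((T ^ n) x) (ContinuousLinearMap.adjoint T y) : ℂ))
        atTop (𝓝 (inner ℂ (P x) (ContinuousLinearMap.adjoint T y))) :=
      hconv x (ContinuousLinearMap.adjoint T y)
    have h2 : Tendsto (fun n : ℕ => (inner ℂ ((T ^ n) x) (ContinuousLinearMap.adjoint T y) : ℂ))
        atTop (𝓝 (inner ℂ (P x) y)) := by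
      have he : (fun n : ℕ => (inner ℂ ((T ^ n) x) (ContinuousLinearMap.adjoint T y) : ℂ))
          = fun n : ℕ => (inner ℂ ((T ^ (n + 1)) x) y : ℂ) :=
        funext fun n => by rw [adjoint_inner_right, pow_succ', ContinuousLinearMap.mul_apply]
      rw [he]
      exact (hconv x y).comp (tendsto_add_atTop_nat 1)
    have h3 : (inner ℂ (P x) (ContinuousLinearMap.adjoint T y) : ℂ) = inner ℂ (P x) y :=
      tendsto_nhds_unique h1 h2
    rw [← adjoint_inner_right]
    exact h3
  -- P is idempotent
  have hPP : P ∘L P = P := by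
    ext x
    exact hPfix (P x) (hTP x)
  -- kernel membership
  have hker : ∀ x : H, x ∈ LinearMap.ker ((1 - T : H →L[ℂ] H) : H →ₗ[ℂ] H) ↔ T x = x := by
    intro x
    rw [LinearMap.mem_ker]
    constructor
    · intro h
      have : x - T x = 0 := by simpa [sub_apply, one_apply] using h
      linear_combination (norm := module) -this
    · intro h
      simp [sub_apply, one_apply, h]
  have hker' : ∀ x : H, x ∈ LinearMap.ker ((1 - ContinuousLinearMap.adjoint T : H →L[ℂ] H) : H →ₗ[ℂ] H) ↔
      ContinuousLinearMap.adjoint T x = x := by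
    intro x
    rw [LinearMap.mem_ker]
    constructor
    · intro h
      have : x - ContinuousLinearMap.adjoint T x = 0 := by simpa [sub_apply, one_apply] using h
      linear_combination (norm := module) -this
    · intro h
      simp [sub_apply, one_apply, h]
  -- range P = ker (1 - T)
  have hrange : LinearMap.range (P : H →ₗ[ℂ] H) = LinearMap.ker ((1 - T : H →L[ℂ] H) : H →ₗ[ℂ] H) := by
    apply le_antisymm
    · rintro y ⟨x, rfl⟩
      exact (hker _).mpr (hTP x)
    · intro x hx
      exact ⟨x, hPfix x ((hker x).mp hx)⟩
  -- convergence for adjoints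
  have hconv' : ∀ x y : H,
      Tendsto (fun n : ℕ => (inner ℂ ((ContinuousLinearMap.adjoint T ^ n) x) y : ℂ)) atTop
        (𝓝 (inner ℂ (ContinuousLinearMap.adjoint P x) y)) := by
    intro x y
    have he : ∀ n : ℕ, (inner ℂ ((ContinuousLinearMap.adjoint T ^ n) x) y : ℂ)
        = starRingEnd ℂ (inner ℂ ((T ^ n) y) x) := by
      intro n
      rw [← star_eq_adjoint, ← star_pow, star_eq_adjoint, adjoint_inner_left, inner_conj_symm]
    have he2 : (inner ℂ (ContinuousLinearMap.adjoint P x) y : ℂ)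
        = starRingEnd ℂ (inner ℂ (P y) x) := by
      rw [adjoint_inner_left, inner_conj_symm]
    simp only [he, he2]
    exact (hconv y x).star
  have hT'n_fix : ∀ (n : ℕ) (x : H), ContinuousLinearMap.adjoint T x = x →
      (ContinuousLinearMap.adjoint T ^ n) x = x := by
    intro n x hx
    induction n with
    | zero => simp
    | succ n ih => rw [pow_succ, ContinuousLinearMap.mul_apply, hx, ih]
  have hP'fix : ∀ x : H, ContinuousLinearMap.adjoint T x = x →
      ContinuousLinearMap.adjoint P x = x := by
    intro x hx
    apply ext_inner_right ℂ
    intro y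
    have hc2 : Tendsto (fun n : ℕ => (inner ℂ ((ContinuousLinearMap.adjoint T ^ n) x) y : ℂ))
        atTop (𝓝 (inner ℂ x y)) := by
      have he : (fun n : ℕ => (inner ℂ ((ContinuousLinearMap.adjoint T ^ n) x) y : ℂ))
          = fun _ => (inner ℂ x y : ℂ) :=
        funext fun n => by rw [hT'n_fix n x hx]
      rw [he]; exact tendsto_const_nhds
    exact tendsto_nhds_unique (hconv' x y) hc2
  -- adjoint P ∘ P = P
  have hPP' : ContinuousLinearMap.adjoint P ∘L P = P := by
    ext x
    exact hP'fix (P x) (hfixadj (P x) (hTP x))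
  -- P self-adjoint
  have hPadj : ContinuousLinearMap.adjoint P = P := by
    calc ContinuousLinearMap.adjoint P
        = ContinuousLinearMap.adjoint (ContinuousLinearMap.adjoint P ∘L P) := by rw [hPP']
      _ = ContinuousLinearMap.adjoint P ∘L
            ContinuousLinearMap.adjoint (ContinuousLinearMap.adjoint P) := by
          rw [ContinuousLinearMap.adjoint_comp]
      _ = ContinuousLinearMap.adjoint P ∘L P := by rw [adjoint_adjoint]
      _ = P := hPP'
  refine ⟨⟨hPP, hPadj, hrange⟩, ⟨?_, ?_⟩, ?_⟩
  · intro x hx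
    have h := (hker x).mp hx
    rw [hker, h]
    exact h
  · intro x hx
    have h := (hker x).mp hx
    have h2 := hfixadj x h
    rw [hker, h2]
    exact h
  · ext x
    rw [hker, hker']
    exact ⟨fun h => hfixadj x h, fun h => hfixadj' x h⟩
end

section
/- For every real number θ ∈ (1, ∞) there exists a bounded linear operator T on the complex Hilbert space ℓ²(ℕ) such that liminf_{n→∞} ‖T^n‖ = 1, limsup_{n→∞} ‖T^n‖ = θ, and T is weakly stable, i.e., ⟨T^n x, y⟩ → 0 as n → ∞ for all x, y ∈ ℓ²(ℕ). In particular, T is weakly stable but neither a contraction nor uniformly stable. -/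
open Filter Topology
open scoped ENNReal
set_option maxHeartbeats 1000000

noncomputable section Stmt18Aux

namespace Stmt18Aux

abbrev E := lp (fun _ : ℕ => ℂ) 2

lemma rpow2 (r : ℝ) : r ^ ((2 : ℝ≥0∞).toReal) = r ^ 2 := by
  rw [show ((2 : ℝ≥0∞).toReal) = ((2 : ℕ) : ℝ) by norm_num, Real.rpow_natCast]

lemma summable_norm_sq (x : E) : Summable (fun k => ‖x k‖ ^ 2) := by
  have := (lp.memℓp x).summable (p := 2) (by norm_num)
  simpa [rpow2] using this

lemma summable_shift (x : E) (n : ℕ) : Summable (fun k => ‖x (k - n)‖ ^ 2) := by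
  rw [← summable_nat_add_iff n]
  simpa using summable_norm_sq x

/-- membership of a weighted shifted sequence -/
lemma key (x : E) (c : ℕ → ℝ) (n : ℕ) (M : ℝ) (hc : ∀ k, |c k| ≤ M) :
    Memℓp (fun k => ((c k : ℂ) * x (k - n))) 2 := by
  apply memℓp_gen
  have hs : Summable (fun k => M ^ 2 * ‖x (k - n)‖ ^ 2) := (summable_shift x n).mul_left _
  apply Summable.of_nonneg_of_le (fun k => by positivity) ?_ hs
  intro k
  simp only [rpow2]
  have h1 : ‖(c k : ℂ) * x (k - n)‖ = |c k| * ‖x (k - n)‖ := by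
    rw [norm_mul]; simp [Complex.norm_real]
  rw [h1, mul_pow]
  have h2 : |c k| ^ 2 ≤ M ^ 2 := by
    have := hc k
    nlinarith [abs_nonneg (c k)]
  nlinarith [sq_nonneg ‖x (k - n)‖, abs_nonneg (c k), norm_nonneg (x (k - n))]

lemma norm_le_general (f : E) (x : E) (c : ℕ → ℝ) (n : ℕ) (M : ℝ) (hM : 0 ≤ M)
    (hc : ∀ k, |c k| ≤ M) (hc0 : ∀ k < n, c k = 0)
    (hf : ∀ k, f k = (c k : ℂ) * x (k - n)) : ‖f‖ ≤ M * ‖x‖ := by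
  apply lp.norm_le_of_tsum_le (by norm_num) (mul_nonneg hM (norm_nonneg _))
  simp only [rpow2]
  have hsumf : Summable (fun k => ‖f k‖ ^ 2) := summable_norm_sq f
  have htail : ∀ i : ℕ, ‖f (i + n)‖ ^ 2 ≤ M ^ 2 * ‖x i‖ ^ 2 := by
    intro i
    rw [hf (i + n)]
    have h1 : ‖(c (i + n) : ℂ) * x (i + n - n)‖ = |c (i + n)| * ‖x i‖ := by
      rw [norm_mul]; simp [Complex.norm_real]
    rw [h1, mul_pow]
    have h2 : |c (i + n)| ^ 2 ≤ M ^ 2 := by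
      have := hc (i + n); nlinarith [abs_nonneg (c (i + n))]
    nlinarith [sq_nonneg ‖x i‖]
  have h0 : ∀ i ∈ Finset.range n, ‖f i‖ ^ 2 = 0 := by
    intro i hi
    rw [hf i, hc0 i (Finset.mem_range.mp hi)]
    simp
  have step1 : ∑' k, ‖f k‖ ^ 2 = ∑' i, ‖f (i + n)‖ ^ 2 := by
    rw [← Summable.sum_add_tsum_nat_add n hsumf, Finset.sum_eq_zero h0, zero_add]
  have step2 : ∑' i, ‖f (i + n)‖ ^ 2 ≤ ∑' i, M ^ 2 * ‖x i‖ ^ 2 :=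
    Summable.tsum_le_tsum htail ((summable_nat_add_iff n).mpr hsumf) ((summable_norm_sq x).mul_left _)
  have step3 : ∑' (i : ℕ), M ^ 2 * ‖x i‖ ^ 2 = (M * ‖x‖) ^ 2 := by
    rw [tsum_mul_left, mul_pow]
    congr 1
    have := lp.norm_rpow_eq_tsum (p := 2) (by norm_num) x
    simp only [rpow2] at this
    rw [this]
  rw [step1, ← step3]
  exact step2

/-- The coefficient of `T^n` at output position `k`. -/
def wcoef (θ : ℝ) (n k : ℕ) : ℝ :=
  if k < n then 0 else if Even n then 1 else if Even k then θ⁻¹ else θ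

lemma wcoef_abs_le (θ : ℝ) (n k : ℕ) : |wcoef θ n k| ≤ 1 + |θ| + |θ⁻¹| := by
  have h0 : (0:ℝ) ≤ |θ| := abs_nonneg _
  have h1 : (0:ℝ) ≤ |θ⁻¹| := abs_nonneg _
  unfold wcoef
  split_ifs <;> simp <;> linarith [inv_nonneg.mpr h0]

lemma wcoef_succ (θ : ℝ) (hθ : θ ≠ 0) (n k : ℕ) :
    wcoef θ (n + 1) k = wcoef θ n k * wcoef θ 1 (k - n) := by
  unfold wcoef
  rcases lt_trichotomy k n with h | h | h
  · rw [if_pos h, if_pos (by omega : k < n + 1), zero_mul]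
  · subst h
    rw [if_pos (by omega : k < k + 1), if_neg (lt_irrefl k), if_pos (by omega : k - k < 1),
      mul_zero]
  · have hkn : ¬ k < n := by omega
    have hk1 : ¬ k < n + 1 := by omega
    have hs1 : ¬ (k - n) < 1 := by omega
    rw [if_neg hkn, if_neg hk1, if_neg hs1]
    have hsub : Even (k - n) ↔ (Even k ↔ Even n) := Nat.even_sub (by omega)
    have h1 : ¬ Even 1 := by decide
    rw [if_neg h1]
    rcases Nat.even_or_odd n with he | ho
    · have hn1 : ¬ Even (n + 1) := by simp [Nat.even_add_one, he]
      rw [if_neg hn1, if_pos he, one_mul]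
      rcases Nat.even_or_odd k with hk | hk
      · rw [if_pos hk, if_pos (hsub.mpr (by tauto))]
      · have hk' : ¬ Even k := Nat.not_even_iff_odd.mpr hk
        rw [if_neg hk', if_neg (by rw [hsub]; tauto)]
    · have hn' : ¬ Even n := Nat.not_even_iff_odd.mpr ho
      have hn1 : Even (n + 1) := by simp [Nat.even_add_one, hn']
      rw [if_pos hn1, if_neg hn']
      rcases Nat.even_or_odd k with hk | hk
      · rw [if_pos hk, if_neg (by rw [hsub]; tauto), inv_mul_cancel₀ hθ]
      · have hk' : ¬ Even k := Nat.not_even_iff_odd.mpr hk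
        rw [if_neg hk', if_pos (hsub.mpr (by tauto)), mul_inv_cancel₀ hθ]

/-- The operator `T` as a continuous linear map. -/
def T (θ : ℝ) : E →L[ℂ] E :=
  LinearMap.mkContinuous
    { toFun := fun x => ⟨fun k => ((wcoef θ 1 k : ℂ) * x (k - 1)), key x _ 1 _ (wcoef_abs_le θ 1)⟩
      map_add' := by
        intro x y
        apply lp.ext
        funext k
        simp only [lp.coeFn_add, Pi.add_apply]
        ring
      map_smul' := by
        intro c x
        apply lp.ext
        funext k
        simp only [lp.coeFn_smul, Pi.smul_apply, RingHom.id_apply, smul_eq_mul]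
        ring }
    (1 + |θ| + |θ⁻¹|)
    (by
      intro x
      exact norm_le_general _ x (wcoef θ 1) 1 _
        (by positivity) (wcoef_abs_le θ 1)
        (fun k hk => by unfold wcoef; rw [if_pos hk]) (fun k => rfl))

lemma T_apply (θ : ℝ) (x : E) (k : ℕ) : (T θ x) k = (wcoef θ 1 k : ℂ) * x (k - 1) := rfl

lemma pow_apply (θ : ℝ) (hθ : θ ≠ 0) (n : ℕ) (x : E) (k : ℕ) :
    ((T θ ^ n) x) k = (wcoef θ n k : ℂ) * x (k - n) := by
  induction n generalizing x k with
  | zero =>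
      simp only [pow_zero, ContinuousLinearMap.one_apply]
      have : wcoef θ 0 k = 1 := by unfold wcoef; simp
      rw [this]
      simp
  | succ n ih =>
      rw [pow_succ]
      have h1 : ((T θ ^ n * T θ) x) k = ((T θ ^ n) (T θ x)) k := rfl
      rw [h1, ih (T θ x) k, T_apply, wcoef_succ θ hθ n k, Nat.sub_sub]
      push_cast
      ring

lemma e0_norm : ‖(lp.single 2 0 (1 : ℂ) : E)‖ = 1 := by
  have := lp.norm_single (E := fun _ : ℕ => ℂ) (p := 2) (by norm_num) 0 (1 : ℂ)
  simpa using this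

lemma pow_norm (θ : ℝ) (hθ : 1 < θ) (n : ℕ) :
    ‖T θ ^ n‖ = if Even n then 1 else θ := by
  have hθ0 : θ ≠ 0 := by linarith
  have hθpos : (0:ℝ) < θ := by linarith
  have hinv : θ⁻¹ ≤ θ := by
    have h1 : θ⁻¹ ≤ 1 := by
      rw [inv_le_one_iff₀]; right; linarith
    linarith
  set M : ℝ := if Even n then 1 else θ with hM
  have hM0 : 0 ≤ M := by rw [hM]; split_ifs <;> linarith
  have hcabs : ∀ k, |wcoef θ n k| ≤ M := by
    intro k
    unfold wcoef
    rw [hM]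
    have hi0 : (0:ℝ) ≤ θ⁻¹ := by positivity
    split_ifs <;> simp_all <;> rw [abs_of_nonneg (by positivity)] <;> linarith
  apply le_antisymm
  · apply ContinuousLinearMap.opNorm_le_bound _ hM0
    intro x
    exact norm_le_general _ x (wcoef θ n) n M hM0 hcabs
      (fun k hk => by unfold wcoef; rw [if_pos hk]) (fun k => pow_apply θ hθ0 n x k)
  · -- lower bound via e0
    have hkey : (T θ ^ n) (lp.single 2 0 (1 : ℂ)) = (M : ℂ) • lp.single 2 n (1 : ℂ) := by
      apply lp.ext
      funext k
      rw [pow_apply θ hθ0 n _ k]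
      simp only [lp.coeFn_smul, Pi.smul_apply, smul_eq_mul, lp.single_apply]
      rcases lt_trichotomy k n with h | h | h
      · have h0 : wcoef θ n k = 0 := by unfold wcoef; rw [if_pos h]
        rw [h0, Pi.single_eq_of_ne (show k ≠ n by omega)]
        simp
      · subst h
        rw [Pi.single_eq_same, show k - k = 0 by omega, Pi.single_eq_same]
        have h1 : wcoef θ k k = M := by
          unfold wcoef; rw [if_neg (lt_irrefl k), hM]
          split_ifs with h1 h2 <;> simp_all
        rw [h1]
      · rw [Pi.single_eq_of_ne (show k ≠ n by omega), Pi.single_eq_of_ne (show k - n ≠ 0 by omega)]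
        simp
    have hval : ‖(T θ ^ n) (lp.single 2 0 (1 : ℂ))‖ = M := by
      rw [hkey, norm_smul]
      have h1 : ‖(lp.single 2 n (1 : ℂ) : E)‖ = 1 := by
        have := lp.norm_single (E := fun _ : ℕ => ℂ) (p := 2) (by norm_num) n (1 : ℂ)
        simpa using this
      rw [h1, mul_one]
      simp [Complex.norm_real, abs_of_nonneg hM0]
    calc M = ‖(T θ ^ n) (lp.single 2 0 (1 : ℂ))‖ := hval.symm
      _ ≤ ‖T θ ^ n‖ * ‖(lp.single 2 0 (1 : ℂ) : E)‖ := (T θ ^ n).le_opNorm _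
      _ = ‖T θ ^ n‖ := by rw [e0_norm, mul_one]

end Stmt18Aux

end Stmt18Aux

open Stmt18Aux

/-- For every `θ ∈ (1, ∞)` there is a bounded operator `T` on `ℓ²(ℕ)` with
`liminf ‖T^n‖ = 1`, `limsup ‖T^n‖ = θ`, and `T` weakly stable; in particular `T` is
weakly stable but neither a contraction nor uniformly stable. -/
theorem stmt18 (θ : ℝ) (hθ : 1 < θ) :
    ∃ T : (lp (fun _ : ℕ => ℂ) 2) →L[ℂ] (lp (fun _ : ℕ => ℂ) 2),
      Filter.liminf (fun n : ℕ => ‖T ^ n‖) atTop = 1 ∧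
      Filter.limsup (fun n : ℕ => ‖T ^ n‖) atTop = θ ∧
      (∀ x y : lp (fun _ : ℕ => ℂ) 2,
        Tendsto (fun n : ℕ => (inner ℂ ((T ^ n) x) y : ℂ)) atTop (𝓝 (0 : ℂ))) ∧
      ¬ ‖T‖ ≤ 1 ∧
      ¬ Tendsto (fun n : ℕ => ‖T ^ n‖) atTop (𝓝 (0 : ℝ)) := by
  have hθ0 : θ ≠ 0 := by linarith
  refine ⟨T θ, ?_, ?_, ?_, ?_, ?_⟩
  · -- liminf = 1
    have hn : (fun n : ℕ => ‖T θ ^ n‖) = fun n => if Even n then 1 else θ := by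
      funext n; exact pow_norm θ hθ n
    rw [hn]
    have hub : ∀ n : ℕ, (if Even n then (1:ℝ) else θ) ≤ θ := by
      intro n; split_ifs <;> linarith
    have hlb : ∀ n : ℕ, (1:ℝ) ≤ (if Even n then (1:ℝ) else θ) := by
      intro n; split_ifs <;> linarith
    apply le_antisymm
    · apply Filter.liminf_le_of_frequently_le
      · apply Filter.frequently_atTop.mpr
        intro N
        exact ⟨2 * N, by omega, by simp [even_two_mul]⟩
      · exact Filter.isBoundedUnder_of ⟨1, hlb⟩
    · apply Filter.le_liminf_of_le
      · exact (Filter.isBoundedUnder_of ⟨θ, hub⟩).isCoboundedUnder_ge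
      · exact Filter.Eventually.of_forall hlb
  · -- limsup = θ
    have hn : (fun n : ℕ => ‖T θ ^ n‖) = fun n => if Even n then 1 else θ := by
      funext n; exact pow_norm θ hθ n
    rw [hn]
    have hub : ∀ n : ℕ, (if Even n then (1:ℝ) else θ) ≤ θ := by
      intro n; split_ifs <;> linarith
    have hlb : ∀ n : ℕ, (1:ℝ) ≤ (if Even n then (1:ℝ) else θ) := by
      intro n; split_ifs <;> linarith
    apply le_antisymm
    · apply Filter.limsup_le_of_le
      · exact (Filter.isBoundedUnder_of ⟨1, hlb⟩).isCoboundedUnder_le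
      · exact Filter.Eventually.of_forall hub
    · apply Filter.le_limsup_of_frequently_le
      · apply Filter.frequently_atTop.mpr
        intro N
        refine ⟨2 * N + 1, by omega, ?_⟩
        have : ¬ Even (2 * N + 1) := by simp [Nat.even_add_one, even_two_mul]
        simp [this]
      · exact Filter.isBoundedUnder_of ⟨θ, hub⟩
  · -- weak stability
    intro x y
    -- truncation of y
    set c : ℕ → ℕ → ℝ := fun n k => if k < n then 0 else 1 with hc
    have hcabs : ∀ n k, |c n k| ≤ 1 := by
      intro n k; by_cases h : k < n <;> simp [hc, h]
    set Y : ℕ → E := fun n => ⟨fun k => ((c n k : ℂ) * y (k - 0)), key y (c n) 0 1 (hcabs n)⟩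
      with hY
    have hYk : ∀ n k, (Y n) k = (c n k : ℂ) * y k := fun n k => rfl
    have hinner : ∀ n : ℕ, (inner ℂ ((T θ ^ n) x) y : ℂ) = inner ℂ ((T θ ^ n) x) (Y n) := by
      intro n
      rw [lp.inner_eq_tsum, lp.inner_eq_tsum]
      apply tsum_congr
      intro k
      by_cases hk : k < n
      · have h0 : ((T θ ^ n) x) k = 0 := by
          rw [pow_apply θ hθ0 n x k]
          have : wcoef θ n k = 0 := by unfold wcoef; rw [if_pos hk]
          rw [this]; simp
        rw [h0, inner_zero_left, inner_zero_left]
      · have : (Y n) k = y k := by rw [hYk, hc]; simp [hk]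
        rw [this]
    have hbound : ∀ n : ℕ, ‖(inner ℂ ((T θ ^ n) x) y : ℂ)‖ ≤ (θ * ‖x‖) * ‖Y n‖ := by
      intro n
      rw [hinner n]
      calc ‖(inner ℂ ((T θ ^ n) x) (Y n) : ℂ)‖ ≤ ‖(T θ ^ n) x‖ * ‖Y n‖ :=
            norm_inner_le_norm _ _
        _ ≤ (θ * ‖x‖) * ‖Y n‖ := by
            apply mul_le_mul_of_nonneg_right _ (norm_nonneg _)
            calc ‖(T θ ^ n) x‖ ≤ ‖T θ ^ n‖ * ‖x‖ := (T θ ^ n).le_opNorm x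
              _ ≤ θ * ‖x‖ := by
                  apply mul_le_mul_of_nonneg_right _ (norm_nonneg _)
                  rw [pow_norm θ hθ n]
                  split_ifs <;> linarith
    -- ‖Y n‖ → 0
    have hYnorm : ∀ n : ℕ, ‖Y n‖ ^ 2 = ∑' j : ℕ, ‖y (j + n)‖ ^ 2 := by
      intro n
      have h1 := lp.norm_rpow_eq_tsum (p := 2) (by norm_num) (Y n)
      simp only [rpow2] at h1
      rw [h1]
      have hs : Summable (fun k => ‖(Y n) k‖ ^ 2) := summable_norm_sq (Y n)
      have h0 : ∀ i ∈ Finset.range n, ‖(Y n) i‖ ^ 2 = 0 := by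
        intro i hi
        rw [hYk, hc]
        simp [Finset.mem_range.mp hi]
      have h2 : ∀ j : ℕ, ‖(Y n) (j + n)‖ ^ 2 = ‖y (j + n)‖ ^ 2 := by
        intro j
        rw [hYk, hc]
        simp [Nat.not_lt.mpr (Nat.le_add_left n j)]
      calc ∑' k, ‖(Y n) k‖ ^ 2
          = ∑ i ∈ Finset.range n, ‖(Y n) i‖ ^ 2 + ∑' j, ‖(Y n) (j + n)‖ ^ 2 :=
            (Summable.sum_add_tsum_nat_add n hs).symm
        _ = ∑' j, ‖y (j + n)‖ ^ 2 := by
            rw [Finset.sum_eq_zero h0, zero_add]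
            exact tsum_congr h2
    have htail : Tendsto (fun n : ℕ => ∑' j : ℕ, ‖y (j + n)‖ ^ 2) atTop (𝓝 0) :=
      tendsto_sum_nat_add (fun k => ‖y k‖ ^ 2)
    have hYto : Tendsto (fun n : ℕ => ‖Y n‖) atTop (𝓝 0) := by
      have h1 : ∀ n : ℕ, ‖Y n‖ = Real.sqrt (∑' j : ℕ, ‖y (j + n)‖ ^ 2) := by
        intro n
        rw [← hYnorm n, Real.sqrt_sq (norm_nonneg _)]
      simp only [h1]
      have := (Real.continuous_sqrt.tendsto 0).comp htail
      simpa [Function.comp_def] using this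
    have hgto : Tendsto (fun n : ℕ => (θ * ‖x‖) * ‖Y n‖) atTop (𝓝 0) := by
      have := hYto.const_mul (θ * ‖x‖)
      simpa using this
    exact squeeze_zero_norm hbound hgto
  · -- not a contraction
    intro h
    have h1 : ‖T θ‖ = θ := by
      have h2 := pow_norm θ hθ 1
      rw [pow_one, if_neg (by decide : ¬ Even 1)] at h2
      exact h2
    rw [h1] at h
    linarith
  · -- not uniformly stable
    intro h
    have h2 : Tendsto (fun n : ℕ => (2 : ℕ) * n) atTop atTop :=
      Filter.tendsto_atTop_mono (fun n => by simp only [id_eq]; omega) tendsto_id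
    have h3 : Tendsto (fun n : ℕ => ‖T θ ^ (2 * n)‖) atTop (𝓝 0) := h.comp h2
    have h4 : (fun n : ℕ => ‖T θ ^ (2 * n)‖) = fun _ => (1 : ℝ) := by
      funext n
      rw [pow_norm θ hθ (2 * n), if_pos (even_two_mul n)]
    rw [h4] at h3
    have := tendsto_nhds_unique h3 tendsto_const_nhds
    norm_num at this
end

section
/- Let H be a complex Hilbert space and let U ∈ B(H) be a unitary operator. Then ker(I − U) reduces U, and the power sequence {U^n} is weakly convergent if and only if ⟨U^n x, y⟩ → 0 as n → ∞ for every x in the orthogonal complement ker(I − U)^⊥ and every y ∈ H; if this is the case, then the weak limit of {U^n} is the orthogonal projection of H onto ker(I − U). -/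
open Filter Topology

/-- Let `U` be unitary. Then `ker (I - U)` reduces `U`, and `{U^n}` is weakly
convergent iff `⟨U^n x, y⟩ → 0` for all `x ∈ ker (I - U)ᗮ` and `y ∈ H`; in that case
the weak limit is the orthogonal projection of `H` onto `ker (I - U)`. -/
theorem stmt19 {H : Type*} [NormedAddCommGroup H] [InnerProductSpace ℂ H] [CompleteSpace H]
    (U : H →L[ℂ] H)
    (hU₁ : U ∘L ContinuousLinearMap.adjoint U = 1)
    (hU₂ : ContinuousLinearMap.adjoint U ∘L U = 1) :
    ((∀ x ∈ LinearMap.ker ((1 - U : H →L[ℂ] H) : H →ₗ[ℂ] H), U x ∈ LinearMap.ker ((1 - U : H →L[ℂ] H) : H →ₗ[ℂ] H)) ∧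
      (∀ x ∈ LinearMap.ker ((1 - U : H →L[ℂ] H) : H →ₗ[ℂ] H),
        ContinuousLinearMap.adjoint U x ∈ LinearMap.ker ((1 - U : H →L[ℂ] H) : H →ₗ[ℂ] H))) ∧
    ((∃ A : H →L[ℂ] H, ∀ x y : H,
        Tendsto (fun n : ℕ => (inner ℂ ((U ^ n) x) y : ℂ)) atTop (𝓝 (inner ℂ (A x) y)))
      ↔ (∀ x ∈ (LinearMap.ker ((1 - U : H →L[ℂ] H) : H →ₗ[ℂ] H))ᗮ, ∀ y : H,
          Tendsto (fun n : ℕ => (inner ℂ ((U ^ n) x) y : ℂ)) atTop (𝓝 (0 : ℂ)))) ∧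
    (∀ P : H →L[ℂ] H,
      (∀ x y : H,
        Tendsto (fun n : ℕ => (inner ℂ ((U ^ n) x) y : ℂ)) atTop (𝓝 (inner ℂ (P x) y))) →
      (P ∘L P = P ∧ ContinuousLinearMap.adjoint P = P ∧
        LinearMap.range (P : H →ₗ[ℂ] H) = LinearMap.ker ((1 - U : H →L[ℂ] H) : H →ₗ[ℂ] H))) := by
  classical
  set K := LinearMap.ker ((1 - U : H →L[ℂ] H) : H →ₗ[ℂ] H) with hKdef
  have hmem : ∀ x : H, x ∈ K ↔ U x = x := by
    intro x
    rw [hKdef, LinearMap.mem_ker, ContinuousLinearMap.coe_coe, ContinuousLinearMap.sub_apply, ContinuousLinearMap.one_apply,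
      sub_eq_zero, eq_comm]
  have hadj : ∀ x ∈ K, ContinuousLinearMap.adjoint U x = x := by
    intro x hx
    have hx' := (hmem x).1 hx
    calc ContinuousLinearMap.adjoint U x
        = (ContinuousLinearMap.adjoint U ∘L U) x := by rw [ContinuousLinearMap.comp_apply, hx']
      _ = x := by rw [hU₂]; rfl
  have hpowfix : ∀ (n : ℕ), ∀ x ∈ K, (U ^ n) x = x := by
    intro n x hx
    induction n with
    | zero => rfl
    | succ n ih => rw [pow_succ, ContinuousLinearMap.mul_apply, (hmem x).1 hx, ih]
  have hadjpow : ∀ n : ℕ, ContinuousLinearMap.adjoint (U ^ n) = (ContinuousLinearMap.adjoint U) ^ n := by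
    intro n
    rw [← ContinuousLinearMap.star_eq_adjoint, ← ContinuousLinearMap.star_eq_adjoint, star_pow]
  have hadjpowfix : ∀ (n : ℕ), ∀ x ∈ K, ((ContinuousLinearMap.adjoint U) ^ n) x = x := by
    intro n x hx
    induction n with
    | zero => rfl
    | succ n ih => rw [pow_succ, ContinuousLinearMap.mul_apply, hadj x hx, ih]
  have hinner_pow : ∀ (n : ℕ) (x y : H),
      (inner ℂ ((U ^ n) x) y : ℂ) = inner ℂ x (((ContinuousLinearMap.adjoint U) ^ n) y) := by
    intro n x y
    rw [← hadjpow, ContinuousLinearMap.adjoint_inner_right]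
  -- key properties of any weak limit
  have key : ∀ A : H →L[ℂ] H,
      (∀ x y : H, Tendsto (fun n : ℕ => (inner ℂ ((U ^ n) x) y : ℂ)) atTop (𝓝 (inner ℂ (A x) y))) →
      (∀ x, A x ∈ K) ∧ (∀ x ∈ K, A x = x) ∧ (∀ x ∈ Kᗮ, A x = 0) := by
    intro A hA
    have hAK : ∀ x, A x ∈ K := by
      intro x
      rw [hmem]
      apply ext_inner_right ℂ
      intro y
      have h1 : Tendsto (fun n : ℕ => (inner ℂ ((U ^ (n + 1)) x) y : ℂ)) atTop
          (𝓝 (inner ℂ (A x) y)) := (hA x y).comp (tendsto_add_atTop_nat 1)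
      have heq : ∀ n : ℕ, (inner ℂ ((U ^ (n + 1)) x) y : ℂ)
          = inner ℂ ((U ^ n) x) (ContinuousLinearMap.adjoint U y) := by
        intro n
        rw [pow_succ', ContinuousLinearMap.mul_apply, ContinuousLinearMap.adjoint_inner_right]
      have h2 : Tendsto (fun n : ℕ => (inner ℂ ((U ^ (n + 1)) x) y : ℂ)) atTop
          (𝓝 (inner ℂ (A x) (ContinuousLinearMap.adjoint U y))) := by
        simpa only [heq] using hA x (ContinuousLinearMap.adjoint U y)
      have := tendsto_nhds_unique h2 h1
      rwa [ContinuousLinearMap.adjoint_inner_right] at this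
    refine ⟨hAK, ?_, ?_⟩
    · intro x hx
      apply ext_inner_right ℂ
      intro y
      have h1 : Tendsto (fun n : ℕ => (inner ℂ ((U ^ n) x) y : ℂ)) atTop (𝓝 (inner ℂ x y)) := by
        simpa only [fun n => hpowfix n x hx] using (tendsto_const_nhds :
          Tendsto (fun _ : ℕ => (inner ℂ x y : ℂ)) atTop (𝓝 (inner ℂ x y)))
      exact tendsto_nhds_unique (hA x y) h1
    · intro x hx
      have hAxperp : A x ∈ Kᗮ := by
        rw [Submodule.mem_orthogonal']
        intro y hy
        have h1 : Tendsto (fun n : ℕ => (inner ℂ ((U ^ n) x) y : ℂ)) atTop (𝓝 (0 : ℂ)) := by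
          have : ∀ n : ℕ, (inner ℂ ((U ^ n) x) y : ℂ) = 0 := by
            intro n
            rw [hinner_pow n x y, hadjpowfix n y hy]
            exact (Submodule.mem_orthogonal' K x).1 hx y hy
          simpa only [this] using (tendsto_const_nhds :
            Tendsto (fun _ : ℕ => (0 : ℂ)) atTop (𝓝 (0 : ℂ)))
        exact tendsto_nhds_unique (hA x y) h1
      have : (inner ℂ (A x) (A x) : ℂ) = 0 :=
        (Submodule.mem_orthogonal' K (A x)).1 hAxperp (A x) (hAK x)
      exact inner_self_eq_zero.mp this
  have hclosed : IsClosed (K : Set H) := ContinuousLinearMap.isClosed_ker (1 - U)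
  haveI : CompleteSpace K := hclosed.completeSpace_coe
  refine ⟨⟨?_, ?_⟩, ?_, ?_⟩
  · intro x hx
    rw [hmem] at hx ⊢
    rw [hx, hx]
  · intro x hx
    rw [hadj x hx]; exact hx
  · constructor
    · rintro ⟨A, hA⟩ x hx y
      have hz := (key A hA).2.2 x hx
      have := hA x y
      rw [hz] at this
      simpa using this
    · intro h
      refine ⟨K.subtypeL ∘L K.orthogonalProjectionOnto, ?_⟩
      intro x y
      set p : H := (K.orthogonalProjectionOnto x : H) with hp
      have hpK : p ∈ K := (K.orthogonalProjectionOnto x).2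
      have hq : x - p ∈ Kᗮ := Submodule.sub_starProjection_mem_orthogonal (K := K) x
      have heq : ∀ n : ℕ, (inner ℂ ((U ^ n) x) y : ℂ)
          = inner ℂ p y + inner ℂ ((U ^ n) (x - p)) y := by
        intro n
        rw [← inner_add_left, map_sub, hpowfix n p hpK]
        congr 1
        abel
      have hlim := (tendsto_const_nhds : Tendsto (fun _ : ℕ => (inner ℂ p y : ℂ)) atTop
        (𝓝 (inner ℂ p y))).add (h (x - p) hq y)
      rw [add_zero] at hlim
      have hAx : (inner ℂ ((K.subtypeL ∘L K.orthogonalProjectionOnto) x) y : ℂ) = inner ℂ p y := rfl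
      rw [hAx]
      simpa only [← heq] using hlim
  · intro P hP
    obtain ⟨hPmem, hPfix, hPzero⟩ := key P hP
    have hPproj : P = K.subtypeL ∘L K.orthogonalProjectionOnto := by
      ext x
      have hq : x - (K.orthogonalProjectionOnto x : H) ∈ Kᗮ :=
        Submodule.sub_starProjection_mem_orthogonal (K := K) x
      have hsplit : P x = P ((K.orthogonalProjectionOnto x : H)) + P (x - (K.orthogonalProjectionOnto x : H)) := by
        rw [← map_add]
        congr 1
        abel
      rw [hsplit, hPfix _ (K.orthogonalProjectionOnto x).2, hPzero _ hq, add_zero]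
      rfl
    refine ⟨?_, ?_, ?_⟩
    · ext x
      exact hPfix (P x) (hPmem x)
    · rw [← ContinuousLinearMap.star_eq_adjoint, hPproj]
      exact isSelfAdjoint_starProjection K
    · apply le_antisymm
      · rintro y ⟨x, rfl⟩
        exact hPmem x
      · intro x hx
        exact ⟨x, hPfix x hx⟩
end
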